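/- arXiv:2206.03723 — 4 statements merged into one kernel-verified Lean document; each statement's English description precedes it below -/
import Mathlib

section
/- For all integers n and ω with 1 ≤ ω ≤ n, the largest adjacency eigenvalue of the complete split graph CS_{n,ω} equals (ω − 1 + √(−3ω² + (4n − 2)ω + 1)) / 2. -/
/-- The adjacency matrix of a simple graph on `Fin n`, over `ℝ`. -/
noncomputable def adjMat {n : ℕ} (G : SimpleGraph (Fin n)) : Matrix (Fin n) (Fin n) ℝ :=
  letI : DecidableRel G.Adj := Classical.decRel _
  G.adjMatrix ℝ

/-- The set of eigenvalues of a real square matrix. -/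
def eigSet {n : ℕ} (M : Matrix (Fin n) (Fin n) ℝ) : Set ℝ :=
  {mu : ℝ | ∃ x : Fin n → ℝ, x ≠ 0 ∧ M.mulVec x = mu • x}

/-- The largest eigenvalue of a real square matrix. -/
noncomputable def lamMax {n : ℕ} (M : Matrix (Fin n) (Fin n) ℝ) : ℝ := sSup (eigSet M)

/-- The least eigenvalue of a real square matrix. -/
noncomputable def lamMin {n : ℕ} (M : Matrix (Fin n) (Fin n) ℝ) : ℝ := sInf (eigSet M)

/-- `λ₁(G)`: the largest adjacency eigenvalue of `G`. -/
noncomputable def lam1 {n : ℕ} (G : SimpleGraph (Fin n)) : ℝ := lamMax (adjMat G)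

/-- The degree of a vertex. -/
noncomputable def deg {n : ℕ} (G : SimpleGraph (Fin n)) (v : Fin n) : ℕ :=
  Nat.card {u : Fin n // G.Adj v u}

/-- The signless Laplacian `Q(G) = D(G) + A(G)`. -/
noncomputable def signlessLap {n : ℕ} (G : SimpleGraph (Fin n)) : Matrix (Fin n) (Fin n) ℝ :=
  Matrix.diagonal (fun v => (deg G v : ℝ)) + adjMat G

/-- `q₁(G)`: the largest signless Laplacian eigenvalue. -/
noncomputable def q1 {n : ℕ} (G : SimpleGraph (Fin n)) : ℝ := lamMax (signlessLap G)

/-- `qₙ(G)`: the least signless Laplacian eigenvalue. -/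
noncomputable def qmin {n : ℕ} (G : SimpleGraph (Fin n)) : ℝ := lamMin (signlessLap G)

/-- The `Q`-spread `s_Q(G) = q₁(G) - qₙ(G)`. -/
noncomputable def sQ {n : ℕ} (G : SimpleGraph (Fin n)) : ℝ := q1 G - qmin G

/-- The complete split graph `CS_{n,ω}`: a clique on the first `ω` vertices, completely
joined to an independent set on the remaining `n - ω` vertices. -/
def CS (n w : ℕ) : SimpleGraph (Fin n) where
  Adj u v := u ≠ v ∧ ((u : ℕ) < w ∨ (v : ℕ) < w)
  symm := ⟨by intro u v h; exact ⟨h.1.symm, h.2.symm⟩⟩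
  loopless := ⟨by intro u h; exact h.1 rfl⟩

/-- `K_{n-1}^+`: the complete graph on the first `n-1` vertices together with a pendant
vertex (the last vertex) joined to exactly one clique vertex (vertex `0`). -/
def KPlus (n : ℕ) : SimpleGraph (Fin n) where
  Adj u v := u ≠ v ∧ (((u : ℕ) < n - 1 ∧ (v : ℕ) < n - 1) ∨ (u : ℕ) = 0 ∨ (v : ℕ) = 0)
  symm := ⟨by intro u v h; refine ⟨h.1.symm, ?_⟩; tauto⟩
  loopless := ⟨by intro u h; exact h.1 rfl⟩

attribute [local instance] Classical.propDecidable

lemma card_filter_lt_fin (n w : ℕ) (h : w ≤ n) :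
    (Finset.univ.filter (fun u : Fin n => (u:ℕ) < w)).card = w := by
  have he : Finset.univ.filter (fun u : Fin n => (u:ℕ) < w)
      = Finset.map (Fin.castLEEmb h) Finset.univ := by
    ext u
    simp only [Finset.mem_filter, Finset.mem_univ, true_and, Finset.mem_map, Fin.castLEEmb,
      Function.Embedding.coeFn_mk]
    constructor
    · intro hu; exact ⟨⟨u, hu⟩, by ext; simp⟩
    · rintro ⟨v, rfl⟩; simpa using v.isLt
  rw [he, Finset.card_map, Finset.card_univ, Fintype.card_fin]

lemma CS_adj (n w : ℕ) (v u : Fin n) :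
    (CS n w).Adj v u ↔ v ≠ u ∧ ((v:ℕ) < w ∨ (u:ℕ) < w) := Iff.rfl

lemma adjMat_CS_mulVec (n w : ℕ) (x : Fin n → ℝ) (v : Fin n) :
    (adjMat (CS n w)).mulVec x v = ∑ u : Fin n, (if (CS n w).Adj v u then x u else 0) := by
  simp only [adjMat, Matrix.mulVec, dotProduct, SimpleGraph.adjMatrix_apply]
  refine Finset.sum_congr rfl fun u _ => ?_
  by_cases h : (CS n w).Adj v u <;> simp [h]

lemma mu_props (n w : ℕ) (hw1 : 1 ≤ w) (hwn : w ≤ n) :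
    (((w:ℝ) - 1 + Real.sqrt (-3 * (w:ℝ) ^ 2 + (4 * (n:ℝ) - 2) * w + 1)) / 2) ^ 2
        = ((w:ℝ) - 1) * (((w:ℝ) - 1 + Real.sqrt (-3 * (w:ℝ) ^ 2 + (4 * (n:ℝ) - 2) * w + 1)) / 2)
          + (w:ℝ) * ((n - w : ℕ) : ℝ)
      ∧ (w:ℝ) - 1 ≤ ((w:ℝ) - 1 + Real.sqrt (-3 * (w:ℝ) ^ 2 + (4 * (n:ℝ) - 2) * w + 1)) / 2
      ∧ 0 ≤ ((w:ℝ) - 1 + Real.sqrt (-3 * (w:ℝ) ^ 2 + (4 * (n:ℝ) - 2) * w + 1)) / 2 := by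
  have hW1 : (1:ℝ) ≤ (w:ℝ) := by exact_mod_cast hw1
  have hM0 : (0:ℝ) ≤ ((n - w : ℕ) : ℝ) := Nat.cast_nonneg _
  have hnm : (n:ℝ) = (w:ℝ) + ((n - w : ℕ) : ℝ) := by
    have h : w + (n - w) = n := by omega
    calc (n:ℝ) = ((w + (n - w) : ℕ) : ℝ) := by rw [h]
      _ = (w:ℝ) + ((n - w : ℕ) : ℝ) := by push_cast; ring
  set s := Real.sqrt (-3 * (w:ℝ) ^ 2 + (4 * (n:ℝ) - 2) * w + 1) with hs
  have hprod : (0:ℝ) ≤ 4 * (w:ℝ) * ((n - w : ℕ) : ℝ) :=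
    mul_nonneg (mul_nonneg (by norm_num) (by linarith)) hM0
  have hDeq : -3 * (w:ℝ) ^ 2 + (4 * (n:ℝ) - 2) * w + 1
      = ((w:ℝ) - 1) ^ 2 + 4 * (w:ℝ) * ((n - w : ℕ) : ℝ) := by rw [hnm]; ring
  have hD0 : 0 ≤ -3 * (w:ℝ) ^ 2 + (4 * (n:ℝ) - 2) * w + 1 := by
    rw [hDeq]; have := sq_nonneg ((w:ℝ) - 1); linarith
  have hsq : s ^ 2 = -3 * (w:ℝ) ^ 2 + (4 * (n:ℝ) - 2) * w + 1 := Real.sq_sqrt hD0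
  have hs0 : 0 ≤ s := Real.sqrt_nonneg _
  have hsge : (w:ℝ) - 1 ≤ s := by
    have h1 : Real.sqrt (((w:ℝ) - 1) ^ 2) ≤ s := by
      rw [hs]; exact Real.sqrt_le_sqrt (by rw [hDeq]; linarith)
    rwa [Real.sqrt_sq (by linarith : (0:ℝ) ≤ (w:ℝ) - 1)] at h1
  refine ⟨by linear_combination hsq / 4 + (w:ℝ) * hnm, by linarith, by linarith⟩

set_option maxHeartbeats 1000000 in
/-- Upper bound: every eigenvalue of the adjacency matrix of `CS n w` is at most μ. -/
lemma CS_eig_ub (n w : ℕ) (hw1 : 1 ≤ w) (hwn : w ≤ n) (lam : ℝ)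
    (hlam : lam ∈ eigSet (adjMat (CS n w))) :
    lam ≤ ((w : ℝ) - 1 + Real.sqrt (-3 * (w : ℝ) ^ 2 + (4 * (n : ℝ) - 2) * w + 1)) / 2 := by
  obtain ⟨x, hx0, hx⟩ := hlam
  obtain ⟨hroot, hα, hμ0⟩ := mu_props n w hw1 hwn
  set W : ℝ := (w:ℝ) with hWdef
  set M : ℝ := ((n - w : ℕ) : ℝ) with hMdef
  set μ : ℝ := ((w : ℝ) - 1 + Real.sqrt (-3 * (w : ℝ) ^ 2 + (4 * (n : ℝ) - 2) * w + 1)) / 2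
    with hμdef
  show lam ≤ μ
  have hW1 : (1:ℝ) ≤ W := by rw [hWdef]; exact_mod_cast hw1
  have hM0 : (0:ℝ) ≤ M := by rw [hMdef]; exact Nat.cast_nonneg _
  set y : Fin n → ℝ := fun v => |x v| with hydef
  have hy0 : ∀ v, 0 ≤ y v := fun v => abs_nonneg _
  set F : Finset (Fin n) := Finset.univ.filter (fun v : Fin n => (v:ℕ) < w) with hFdef
  set Fc : Finset (Fin n) := Finset.univ.filter (fun v : Fin n => ¬ (v:ℕ) < w) with hFcdef
  have hcardF : F.card = w := card_filter_lt_fin n w hwn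
  have hcardFc : Fc.card = n - w := by
    have he : Fc = Finset.univ \ F := by rw [hFcdef, hFdef, Finset.filter_not]
    rw [he, Finset.card_sdiff_of_subset (Finset.subset_univ F), Finset.card_univ, Fintype.card_fin, hcardF]
  set S : ℝ := ∑ v ∈ F, y v with hSdef
  set T : ℝ := ∑ v ∈ Fc, y v with hTdef
  set P : ℝ := ∑ v ∈ F, y v ^ 2 with hPdef
  set Q : ℝ := ∑ v ∈ Fc, y v ^ 2 with hQdef
  have hS0 : 0 ≤ S := Finset.sum_nonneg fun v _ => hy0 v
  have hT0 : 0 ≤ T := Finset.sum_nonneg fun v _ => hy0 v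
  have hP0 : 0 ≤ P := Finset.sum_nonneg fun v _ => sq_nonneg _
  have hQ0 : 0 ≤ Q := Finset.sum_nonneg fun v _ => sq_nonneg _
  have hCSP : S ^ 2 ≤ W * P := by
    have h := sq_sum_le_card_mul_sum_sq (s := F) (f := y)
    rw [hcardF] at h
    calc S ^ 2 ≤ (w:ℕ) * P := by exact_mod_cast h
      _ = W * P := by rw [hWdef]
  have hCSQ : T ^ 2 ≤ M * Q := by
    have h := sq_sum_le_card_mul_sum_sq (s := Fc) (f := y)
    rw [hcardFc] at h
    calc T ^ 2 ≤ ((n - w : ℕ) : ℝ) * Q := by exact_mod_cast h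
      _ = M * Q := by rw [hMdef]
  have hquad : lam * (∑ v : Fin n, x v ^ 2)
      = ∑ v : Fin n, ∑ u : Fin n, (if (CS n w).Adj v u then x v * x u else 0) := by
    have h1 : ∀ v, (adjMat (CS n w)).mulVec x v = lam * x v := by
      intro v; rw [hx]; simp
    calc lam * (∑ v : Fin n, x v ^ 2) = ∑ v : Fin n, x v * (lam * x v) := by
          rw [Finset.mul_sum]; refine Finset.sum_congr rfl fun v _ => by ring
      _ = ∑ v : Fin n, x v * (adjMat (CS n w)).mulVec x v := by
          refine Finset.sum_congr rfl fun v _ => by rw [h1]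
      _ = ∑ v : Fin n, ∑ u : Fin n, (if (CS n w).Adj v u then x v * x u else 0) := by
          refine Finset.sum_congr rfl fun v _ => ?_
          rw [adjMat_CS_mulVec, Finset.mul_sum]
          refine Finset.sum_congr rfl fun u _ => ?_
          split_ifs <;> ring
  have habs : ∑ v : Fin n, ∑ u : Fin n, (if (CS n w).Adj v u then x v * x u else 0)
      ≤ ∑ v : Fin n, ∑ u : Fin n, (if (CS n w).Adj v u then y v * y u else 0) := by
    refine Finset.sum_le_sum fun v _ => Finset.sum_le_sum fun u _ => ?_
    split_ifs
    · calc x v * x u ≤ |x v * x u| := le_abs_self _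
        _ = y v * y u := abs_mul _ _
    · exact le_rfl
  have hptwise : ∀ v u : Fin n, (if (CS n w).Adj v u then y v * y u else 0)
      = y v * y u - (if ¬ (v:ℕ) < w ∧ ¬ (u:ℕ) < w then y v * y u else 0)
        - (if v = u ∧ (v:ℕ) < w then y v * y u else 0) := by
    intro v u
    by_cases h1 : v = u <;> by_cases h2 : (v:ℕ) < w <;> by_cases h3 : (u:ℕ) < w <;>
      simp [CS_adj, h1, h2, h3] <;> first | ring | (subst h1; simp_all)
  have hform : ∑ v : Fin n, ∑ u : Fin n, (if (CS n w).Adj v u then y v * y u else 0)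
      = S ^ 2 + 2 * S * T - P := by
    have e1 : ∑ v : Fin n, ∑ u : Fin n, y v * y u = (S + T) ^ 2 := by
      rw [← Finset.sum_mul_sum]
      have h : ∑ v : Fin n, y v = S + T := by
        rw [hSdef, hTdef, Finset.sum_filter_add_sum_filter_not]
      rw [h]; ring
    have e2 : ∑ v : Fin n, ∑ u : Fin n, (if ¬ (v:ℕ) < w ∧ ¬ (u:ℕ) < w then y v * y u else 0)
        = T * T := by
      have h : ∀ v u : Fin n, (if ¬ (v:ℕ) < w ∧ ¬ (u:ℕ) < w then y v * y u else 0)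
          = (if ¬ (v:ℕ) < w then y v else 0) * (if ¬ (u:ℕ) < w then y u else 0) := by
        intro v u; by_cases h2 : (v:ℕ) < w <;> by_cases h3 : (u:ℕ) < w <;> simp [h2, h3]
      simp_rw [h]
      rw [← Finset.sum_mul_sum]
      rw [show ∑ v : Fin n, (if ¬ (v:ℕ) < w then y v else 0) = T by
        rw [hTdef, Finset.sum_filter]]
    have e3 : ∑ v : Fin n, ∑ u : Fin n, (if v = u ∧ (v:ℕ) < w then y v * y u else 0) = P := by
      have h : ∀ v : Fin n, ∑ u : Fin n, (if v = u ∧ (v:ℕ) < w then y v * y u else 0)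
          = (if (v:ℕ) < w then y v ^ 2 else 0) := by
        intro v
        by_cases h2 : (v:ℕ) < w
        · simp only [h2, and_true, if_true]
          rw [Finset.sum_ite_eq Finset.univ v (fun u => y v * y u)]
          simp [sq]
        · simp [h2]
      simp_rw [h]
      rw [hPdef, Finset.sum_filter]
    calc ∑ v : Fin n, ∑ u : Fin n, (if (CS n w).Adj v u then y v * y u else 0)
        = ∑ v : Fin n, ∑ u : Fin n, (y v * y u
            - (if ¬ (v:ℕ) < w ∧ ¬ (u:ℕ) < w then y v * y u else 0)
            - (if v = u ∧ (v:ℕ) < w then y v * y u else 0)) := by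
          refine Finset.sum_congr rfl fun v _ => Finset.sum_congr rfl fun u _ => hptwise v u
      _ = (∑ v : Fin n, ∑ u : Fin n, y v * y u)
            - (∑ v : Fin n, ∑ u : Fin n, (if ¬ (v:ℕ) < w ∧ ¬ (u:ℕ) < w then y v * y u else 0))
            - (∑ v : Fin n, ∑ u : Fin n, (if v = u ∧ (v:ℕ) < w then y v * y u else 0)) := by
          simp only [Finset.sum_sub_distrib]
      _ = (S + T) ^ 2 - T * T - P := by rw [e1, e2, e3]
      _ = S ^ 2 + 2 * S * T - P := by ring
  have hxsq : ∑ v : Fin n, x v ^ 2 = P + Q := by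
    have h : ∀ v : Fin n, x v ^ 2 = y v ^ 2 := fun v => (sq_abs _).symm
    simp_rw [h]
    rw [hPdef, hQdef, Finset.sum_filter_add_sum_filter_not]
  have hpos : 0 < P + Q := by
    rw [← hxsq]
    obtain ⟨v, hv⟩ := Function.ne_iff.mp hx0
    simp only [Pi.zero_apply] at hv
    exact Finset.sum_pos' (fun i _ => sq_nonneg _)
      ⟨v, Finset.mem_univ v, pow_two_pos_of_ne_zero hv⟩
  have hmain : S ^ 2 + 2 * S * T - P ≤ μ * (P + Q) := by
    by_cases hm : n - w = 0
    · have hT : T = 0 := by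
        have he : Fc = ∅ := Finset.card_eq_zero.mp (by rw [hcardFc, hm])
        rw [hTdef, he, Finset.sum_empty]
      have hQz : Q = 0 := by
        have he : Fc = ∅ := Finset.card_eq_zero.mp (by rw [hcardFc, hm])
        rw [hQdef, he, Finset.sum_empty]
      have h4 : 0 ≤ (μ - (W - 1)) * P := mul_nonneg (by linarith) hP0
      have h5 : 0 ≤ μ * Q := mul_nonneg hμ0 hQ0
      rw [hT, hQz]
      have e : μ * (P + 0) = μ * P := by ring
      nlinarith [h4, hCSP, hP0]
    · have hM1 : (1:ℝ) ≤ M := by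
        rw [hMdef]; exact_mod_cast Nat.one_le_iff_ne_zero.mpr hm
      have hα0 : (0:ℝ) ≤ μ - (W - 1) := by linarith
      have hαμ : (μ - (W - 1)) * μ = W * M := by linear_combination hroot
      have ha2 : Real.sqrt ((μ - (W - 1)) * M) ^ 2 = (μ - (W - 1)) * M :=
        Real.sq_sqrt (mul_nonneg hα0 hM0)
      have hb2 : Real.sqrt (μ * W) ^ 2 = μ * W :=
        Real.sq_sqrt (mul_nonneg hμ0 (by linarith))
      have hab : Real.sqrt ((μ - (W - 1)) * M) * Real.sqrt (μ * W) = W * M := by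
        rw [← Real.sqrt_mul (mul_nonneg hα0 hM0)]
        rw [show (μ - (W - 1)) * M * (μ * W) = (W * M) ^ 2 by
          linear_combination (M * W) * hαμ]
        exact Real.sqrt_sq (mul_nonneg (by linarith) hM0)
      set a : ℝ := Real.sqrt ((μ - (W - 1)) * M)
      set b : ℝ := Real.sqrt (μ * W)
      have key : 0 ≤ (μ - (W - 1)) * M * S ^ 2 - 2 * (W * M) * (S * T) + (μ * W) * T ^ 2 := by
        have hsqn := sq_nonneg (a * S - b * T)
        have hexp : (a * S - b * T) ^ 2
            = a ^ 2 * S ^ 2 - 2 * (a * b) * (S * T) + b ^ 2 * T ^ 2 := by ring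
        rw [hexp, ha2, hb2, hab] at hsqn
        linarith
      have h1 : ((μ + 1) * M) * (S ^ 2) ≤ ((μ + 1) * M) * (W * P) :=
        mul_le_mul_of_nonneg_left hCSP (mul_nonneg (by linarith) hM0)
      have h2 : (μ * W) * (T ^ 2) ≤ (μ * W) * (M * Q) :=
        mul_le_mul_of_nonneg_left hCSQ (mul_nonneg hμ0 (by linarith))
      have hWM : 0 < W * M := mul_pos (by linarith) (by linarith)
      have big : (W * M) * 0 ≤ (W * M) * (μ * (P + Q) - (S ^ 2 + 2 * S * T - P)) := by
        have e : (W * M) * (μ * (P + Q) - (S ^ 2 + 2 * S * T - P))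
            = (((μ + 1) * M) * (W * P) - ((μ + 1) * M) * (S ^ 2))
              + (((μ * W) * (M * Q)) - (μ * W) * (T ^ 2))
              + ((μ - (W - 1)) * M * S ^ 2 - 2 * (W * M) * (S * T) + (μ * W) * T ^ 2) := by
          ring
        rw [e, mul_zero]
        linarith
      have h3 := le_of_mul_le_mul_left big hWM
      linarith
  have hfin : lam * (P + Q) ≤ μ * (P + Q) := by
    calc lam * (P + Q) = lam * (∑ v : Fin n, x v ^ 2) := by rw [hxsq]
      _ = ∑ v : Fin n, ∑ u : Fin n, (if (CS n w).Adj v u then x v * x u else 0) := hquad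
      _ ≤ ∑ v : Fin n, ∑ u : Fin n, (if (CS n w).Adj v u then y v * y u else 0) := habs
      _ = S ^ 2 + 2 * S * T - P := hform
      _ ≤ μ * (P + Q) := hmain
  exact le_of_mul_le_mul_right hfin hpos

set_option maxHeartbeats 1000000 in
lemma CS_eig_mem (n w : ℕ) (hw1 : 1 ≤ w) (hwn : w ≤ n) :
    (((w:ℝ) - 1 + Real.sqrt (-3 * (w:ℝ) ^ 2 + (4 * (n:ℝ) - 2) * w + 1)) / 2)
      ∈ eigSet (adjMat (CS n w)) := by
  obtain ⟨hroot, hα, hμ0⟩ := mu_props n w hw1 hwn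
  set μ : ℝ := ((w:ℝ) - 1 + Real.sqrt (-3 * (w:ℝ) ^ 2 + (4 * (n:ℝ) - 2) * w + 1)) / 2
    with hμdef
  clear_value μ
  have hW1 : (1:ℝ) ≤ (w:ℝ) := by exact_mod_cast hw1
  by_cases hspec : n = 1
  · have hw : w = 1 := by omega
    subst hspec; subst hw
    have hμz : μ = 0 := by
      rw [hμdef]
      norm_num
    refine ⟨fun _ => 1, ?_, ?_⟩
    · intro h
      have := congrFun h ⟨0, one_pos⟩
      simpa using this
    · funext v
      have hnadj : ∀ u : Fin 1, ¬ (CS 1 1).Adj v u := by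
        intro u hadj; exact hadj.1 (Subsingleton.elim v u)
      rw [adjMat_CS_mulVec]
      simp [hnadj, hμz]
  · have hn2 : 2 ≤ n := by omega
    refine ⟨fun v => if (v:ℕ) < w then μ else (w:ℝ), ?_, ?_⟩
    · intro h
      by_cases hnw : w < n
      · have h0 := congrFun h ⟨w, hnw⟩
        simp only [Pi.zero_apply] at h0
        rw [if_neg (by simp)] at h0
        have : (1:ℝ) ≤ (0:ℝ) := h0 ▸ hW1
        linarith
      · have hwe : w = n := le_antisymm hwn (not_lt.mp hnw)
        have h0 := congrFun h ⟨0, by omega⟩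
        simp only [Pi.zero_apply] at h0
        rw [if_pos (show 0 < w from hw1)] at h0
        have hn2' : (2:ℝ) ≤ (w:ℝ) := by rw [hwe]; exact_mod_cast hn2
        have : (1:ℝ) ≤ μ := by linarith
        rw [h0] at this; linarith
    · funext v
      rw [adjMat_CS_mulVec]
      simp only [Pi.smul_apply, smul_eq_mul]
      have htotF : ∑ u ∈ Finset.univ.filter (fun u : Fin n => (u:ℕ) < w), μ = (w:ℝ) * μ := by
        rw [Finset.sum_const, card_filter_lt_fin n w hwn, nsmul_eq_mul]
      by_cases hv : (v:ℕ) < w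
      · have hpt : ∀ u : Fin n, (if (CS n w).Adj v u then
            (if (u:ℕ) < w then μ else (w:ℝ)) else 0)
            = (if (u:ℕ) < w then μ else (w:ℝ)) -
              (if u = v then (if (u:ℕ) < w then μ else (w:ℝ)) else 0) := by
          intro u
          by_cases h : u = v
          · subst h
            have : ¬ (CS n w).Adj u u := (CS n w).irrefl
            simp [this]
          · have hadj : (CS n w).Adj v u := ⟨fun hh => h hh.symm, Or.inl hv⟩
            simp [hadj, h]
        rw [Finset.sum_congr rfl (fun u _ => hpt u), Finset.sum_sub_distrib]
        rw [Finset.sum_ite_eq' Finset.univ v (fun u => if (u:ℕ) < w then μ else (w:ℝ))]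
        have htot : ∑ u : Fin n, (if (u:ℕ) < w then μ else (w:ℝ))
            = (w:ℝ) * μ + ((n - w : ℕ) : ℝ) * (w:ℝ) := by
          rw [Finset.sum_ite, htotF, Finset.sum_const, nsmul_eq_mul]
          congr 2
          have he : Finset.univ.filter (fun u : Fin n => ¬ (u:ℕ) < w)
              = Finset.univ \ Finset.univ.filter (fun u : Fin n => (u:ℕ) < w) :=
            Finset.filter_not _ _
          rw [he, Finset.card_sdiff_of_subset (Finset.subset_univ _), Finset.card_univ,
            Fintype.card_fin, card_filter_lt_fin n w hwn]
        rw [htot, if_pos (Finset.mem_univ v), if_pos hv]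
        linear_combination -hroot
      · have hpt : ∀ u : Fin n, (if (CS n w).Adj v u then
            (if (u:ℕ) < w then μ else (w:ℝ)) else 0)
            = (if (u:ℕ) < w then μ else 0) := by
          intro u
          by_cases h : (u:ℕ) < w
          · have hne : v ≠ u := by
              intro hh; rw [hh] at hv; exact hv h
            have hadj : (CS n w).Adj v u := ⟨hne, Or.inr h⟩
            simp [hadj, h]
          · have hnadj : ¬ (CS n w).Adj v u := by
              intro hadj
              rcases hadj.2 with h1 | h1
              · exact hv h1
              · exact h h1
            simp [hnadj, h]
        rw [Finset.sum_congr rfl (fun u _ => hpt u)]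
        rw [Finset.sum_ite, Finset.sum_const_zero, add_zero, htotF, if_neg hv]
        ring

theorem stmt5 (n w : ℕ) (hw1 : 1 ≤ w) (hwn : w ≤ n) :
    lam1 (CS n w) =
      ((w : ℝ) - 1 + Real.sqrt (-3 * (w : ℝ) ^ 2 + (4 * (n : ℝ) - 2) * w + 1)) / 2 := by
  have hmem := CS_eig_mem n w hw1 hwn
  have hub : ∀ lam ∈ eigSet (adjMat (CS n w)),
      lam ≤ ((w : ℝ) - 1 + Real.sqrt (-3 * (w : ℝ) ^ 2 + (4 * (n : ℝ) - 2) * w + 1)) / 2 :=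
    fun lam hl => CS_eig_ub n w hw1 hwn lam hl
  show sSup (eigSet (adjMat (CS n w))) = _
  exact le_antisymm (csSup_le ⟨_, hmem⟩ hub) (le_csSup ⟨_, hub⟩ hmem)
end

section
/- For all integers n and ω with 1 ≤ ω ≤ n − 1, if G = CS_{n,ω} then λ1(G) + λ1(Ḡ) = (√(−3ω² + (4n − 2)ω + 1) − ω)/2 + n − 3/2. -/
open Finset in
private lemma sum_split' (n w : ℕ) (hw : w ≤ n) (a b : ℝ) :
    ∑ v : Fin n, (if (v : ℕ) < w then a else b) = w * a + ((n : ℝ) - w) * b := by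
  rw [Fin.sum_univ_eq_sum_range (fun j => if j < w then a else b)]
  rw [Finset.range_eq_Ico, ← Finset.sum_Ico_consecutive _ (Nat.zero_le w) hw]
  have e1 : ∀ j ∈ Finset.Ico 0 w, (if j < w then a else b) = a := by
    intro j hj; simp only [Finset.mem_Ico] at hj; simp [hj.2]
  have e2 : ∀ j ∈ Finset.Ico w n, (if j < w then a else b) = b := by
    intro j hj; simp only [Finset.mem_Ico] at hj; simp [Nat.not_lt.mpr hj.1]
  rw [Finset.sum_congr rfl e1, Finset.sum_congr rfl e2, Finset.sum_const, Finset.sum_const,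
    Nat.card_Ico, Nat.card_Ico, nsmul_eq_mul, nsmul_eq_mul, Nat.cast_sub hw]
  simp

open Finset in
private lemma CS_mulVec (n w : ℕ) (x : Fin n → ℝ) (u : Fin n) :
    (adjMat (CS n w)).mulVec x u =
      if (u : ℕ) < w then (∑ v, x v) - x u
      else ∑ v : Fin n, (if (v : ℕ) < w then x v else 0) := by
  classical
  have base : (adjMat (CS n w)).mulVec x u
      = ∑ v, (if (CS n w).Adj u v then x v else 0) := by
    simp only [adjMat, Matrix.mulVec, dotProduct, SimpleGraph.adjMatrix_apply,
      ite_mul, one_mul, zero_mul]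
  rw [base]
  by_cases hu : (u : ℕ) < w
  · simp only [if_pos hu]
    have e : ∀ v ∈ (Finset.univ : Finset (Fin n)), (if (CS n w).Adj u v then x v else 0)
        = x v - (if v = u then x v else 0) := by
      intro v _
      by_cases hv : v = u
      · subst hv; simp [CS]
      · have : (CS n w).Adj u v := ⟨Ne.symm hv, Or.inl hu⟩
        simp [this, hv]
    rw [Finset.sum_congr rfl e, Finset.sum_sub_distrib, Finset.sum_ite_eq' Finset.univ u x]
    simp
  · simp only [if_neg hu]
    refine Finset.sum_congr rfl (fun v _ => ?_)
    by_cases hv : (v : ℕ) < w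
    · have hne : u ≠ v := by intro h; rw [h] at hu; exact hu hv
      have : (CS n w).Adj u v := ⟨hne, Or.inr hv⟩
      simp [this, hv]
    · have : ¬ (CS n w).Adj u v := by
        intro h; rcases h.2 with h' | h' <;> [exact hu h'; exact hv h']
      simp [this, hv]

lemma CSc_mulVec (n w : ℕ) (x : Fin n → ℝ) (u : Fin n) :
    (adjMat (CS n w)ᶜ).mulVec x u =
      if (u : ℕ) < w then 0
      else (∑ v : Fin n, (if (v : ℕ) < w then 0 else x v)) - x u := by
  classical
  have base : (adjMat (CS n w)ᶜ).mulVec x u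
      = ∑ v, (if ((CS n w)ᶜ).Adj u v then x v else 0) := by
    simp only [adjMat, Matrix.mulVec, dotProduct, SimpleGraph.adjMatrix_apply,
      ite_mul, one_mul, zero_mul]
  have hadj : ∀ v, ((CS n w)ᶜ).Adj u v ↔ (u ≠ v ∧ ¬ (u : ℕ) < w ∧ ¬ (v : ℕ) < w) := by
    intro v
    simp only [SimpleGraph.compl_adj, CS]
    constructor
    · rintro ⟨h1, h2⟩
      refine ⟨h1, ?_, ?_⟩ <;> { intro h; exact h2 ⟨h1, by tauto⟩ }
    · rintro ⟨h1, h2, h3⟩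
      exact ⟨h1, fun h => by tauto⟩
  rw [base]
  by_cases hu : (u : ℕ) < w
  · simp only [if_pos hu]
    refine Finset.sum_eq_zero (fun v _ => ?_)
    have : ¬ ((CS n w)ᶜ).Adj u v := by rw [hadj]; tauto
    simp [this]
  · simp only [if_neg hu]
    have e : ∀ v ∈ (Finset.univ : Finset (Fin n)), (if ((CS n w)ᶜ).Adj u v then x v else 0)
        = (if (v : ℕ) < w then 0 else x v) - (if v = u then x v else 0) := by
      intro v _
      by_cases hv : v = u
      · subst hv; simp [SimpleGraph.irrefl, hu]
      · by_cases hvw : (v : ℕ) < w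
        · have : ¬ ((CS n w)ᶜ).Adj u v := by rw [hadj]; tauto
          simp [this, hvw, hv]
        · have : ((CS n w)ᶜ).Adj u v := by rw [hadj]; exact ⟨Ne.symm hv, hu, hvw⟩
          simp [this, hvw, hv]
    rw [Finset.sum_congr rfl e, Finset.sum_sub_distrib, Finset.sum_ite_eq' Finset.univ u x]
    simp

open Finset in
set_option maxHeartbeats 1000000 in
private lemma CS_greatest (n w : ℕ) (hw1 : 1 ≤ w) (hwn : w + 1 ≤ n) :
    IsGreatest (eigSet (adjMat (CS n w)))
      (((w : ℝ) - 1 + Real.sqrt (-3 * (w : ℝ) ^ 2 + (4 * (n : ℝ) - 2) * w + 1)) / 2) := by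
  have hwn' : w ≤ n := by omega
  have hwR : (1 : ℝ) ≤ (w : ℝ) := by exact_mod_cast hw1
  have hnR : (w : ℝ) + 1 ≤ (n : ℝ) := by exact_mod_cast hwn
  set D : ℝ := -3 * (w : ℝ) ^ 2 + (4 * (n : ℝ) - 2) * w + 1 with hD
  have hDnn : 0 ≤ D := by nlinarith
  set s : ℝ := Real.sqrt D with hs
  have hs2 : s ^ 2 = D := Real.sq_sqrt hDnn
  have hsnn : 0 ≤ s := Real.sqrt_nonneg _
  set L : ℝ := ((w : ℝ) - 1 + s) / 2 with hL
  -- L satisfies the quadratic  L^2 = (w-1) L + w (n - w)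
  have hquad : L ^ 2 = ((w : ℝ) - 1) * L + (w : ℝ) * ((n : ℝ) - w) := by
    have : s ^ 2 = ((w : ℝ) - 1) ^ 2 + 4 * (w : ℝ) * ((n : ℝ) - w) := by
      rw [hs2, hD]; ring
    nlinarith [this]
  have hLnn : (w : ℝ) - 1 ≤ L := by
    have : (w : ℝ) - 1 ≤ s := by
      have : ((w:ℝ) - 1) ^ 2 ≤ D := by nlinarith
      nlinarith [hs2, hsnn]
    simp only [hL]; nlinarith
  have hL0 : 0 ≤ L := by nlinarith
  constructor
  · -- membership: eigenvector
    refine ⟨fun u => if (u : ℕ) < w then L else (w : ℝ), ?_, ?_⟩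
    · intro h
      have hn0 : n - 1 < n := by omega
      have := congrFun h ⟨n - 1, hn0⟩
      simp only [Pi.zero_apply] at this
      rw [if_neg (by simp; omega)] at this
      have : (w : ℝ) ≠ 0 := by positivity
      simp_all
    · funext u
      rw [CS_mulVec]
      have hT : ∑ v : Fin n, (if (v : ℕ) < w then L else (w : ℝ))
          = w * L + ((n : ℝ) - w) * w := sum_split' n w hwn' L w
      have hC : ∑ v : Fin n, (if (v : ℕ) < w then (if (v : ℕ) < w then L else (w:ℝ)) else 0)
          = w * L := by
        have e : ∀ v ∈ (Finset.univ : Finset (Fin n)),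
            (if (v : ℕ) < w then (if (v : ℕ) < w then L else (w:ℝ)) else 0)
            = (if (v : ℕ) < w then L else 0) := by
          intro v _; by_cases hv : (v : ℕ) < w <;> simp [hv]
        rw [Finset.sum_congr rfl e, sum_split' n w hwn' L 0]; ring
      by_cases hu : (u : ℕ) < w
      · simp only [if_pos hu, Pi.smul_apply, smul_eq_mul, hT]
        nlinarith [hquad]
      · simp only [if_neg hu, Pi.smul_apply, smul_eq_mul, hC]
        ring
  · -- upper bound
    rintro mu ⟨x, hx0, hx⟩
    by_contra hlt
    push_neg at hlt
    have hmu0 : 0 < mu := lt_of_le_of_lt hL0 hlt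
    have hmu1 : mu + 1 ≠ 0 := by positivity
    have key : ∀ u : Fin n, (adjMat (CS n w)).mulVec x u = mu * x u := by
      intro u; rw [hx]; simp
    -- all clique coordinates are equal
    set T : ℝ := ∑ v, x v with hT
    set C : ℝ := ∑ v : Fin n, (if (v : ℕ) < w then x v else 0) with hC
    have hclique : ∀ u : Fin n, (u : ℕ) < w → (mu + 1) * x u = T := by
      intro u hu
      have := key u
      rw [CS_mulVec, if_pos hu] at this
      linarith
    have hind : ∀ u : Fin n, ¬ (u : ℕ) < w → mu * x u = C := by
      intro u hu
      have := key u
      rw [CS_mulVec, if_neg hu] at this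
      linarith
    set a : ℝ := T / (mu + 1) with ha
    set b : ℝ := C / mu with hb
    have hxa : ∀ u : Fin n, (u : ℕ) < w → x u = a := by
      intro u hu
      rw [ha, eq_div_iff hmu1]
      linarith [hclique u hu]
    have hxb : ∀ u : Fin n, ¬ (u : ℕ) < w → x u = b := by
      intro u hu
      rw [hb, eq_div_iff (ne_of_gt hmu0)]
      linarith [hind u hu]
    have hxfun : ∀ u : Fin n, x u = if (u : ℕ) < w then a else b := by
      intro u; by_cases hu : (u : ℕ) < w
      · rw [if_pos hu]; exact hxa u hu
      · rw [if_neg hu]; exact hxb u hu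
    have hTval : T = w * a + ((n : ℝ) - w) * b := by
      rw [hT, Finset.sum_congr rfl (fun v _ => hxfun v), sum_split' n w hwn' a b]
    have hCval : C = w * a := by
      have e : ∀ v ∈ (Finset.univ : Finset (Fin n)), (if (v : ℕ) < w then x v else 0)
          = (if (v : ℕ) < w then a else 0) := by
        intro v _; by_cases hv : (v : ℕ) < w <;> simp [hv, hxa v]
      rw [hC, Finset.sum_congr rfl e, sum_split' n w hwn' a 0]; ring
    -- a ≠ 0
    have ha0 : a ≠ 0 := by
      intro h0
      have hb0 : b = 0 := by
        have hu0 : n - 1 < n := by omega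
        have h1 : ¬ ((⟨n - 1, hu0⟩ : Fin n) : ℕ) < w := by simp; omega
        have := hind _ h1
        rw [hxb _ h1, hCval, h0] at this
        have : mu * b = 0 := by rw [this]; ring
        exact (mul_eq_zero.mp this).resolve_left (ne_of_gt hmu0)
      apply hx0
      funext u
      rw [hxfun u, h0, hb0]; simp
    -- derive the quadratic for mu
    have h1 : (mu + 1) * a = w * a + ((n : ℝ) - w) * b := by
      have hu0 : (0 : ℕ) < n := by omega
      have hlt0 : ((⟨0, hu0⟩ : Fin n) : ℕ) < w := by simp; omega
      have := hclique _ hlt0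
      rw [hxa _ hlt0] at this
      rw [this, hTval]
    have h2 : mu * b = w * a := by
      have hu0 : n - 1 < n := by omega
      have hge : ¬ ((⟨n - 1, hu0⟩ : Fin n) : ℕ) < w := by simp; omega
      have := hind _ hge
      rw [hxb _ hge] at this
      rw [this, hCval]
    have hmuquad : mu ^ 2 = ((w : ℝ) - 1) * mu + (w : ℝ) * ((n : ℝ) - w) := by
      have h3 : mu * ((mu + 1) * a) = mu * (w * a) + ((n : ℝ) - w) * (mu * b) := by
        rw [h1]; ring
      rw [h2] at h3
      have h4 : a * (mu ^ 2 - ((w : ℝ) - 1) * mu - (w : ℝ) * ((n : ℝ) - w)) = 0 := by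
        linear_combination h3
      have := (mul_eq_zero.mp h4).resolve_left ha0
      linarith
    -- contradiction: mu > L but both roots
    have hfac : (mu - L) * (mu + L - ((w : ℝ) - 1)) = 0 := by
      linear_combination hmuquad - hquad
    rcases mul_eq_zero.mp hfac with h | h
    · linarith
    · linarith

set_option maxHeartbeats 1000000 in
private lemma CSc_greatest (n w : ℕ) (hw1 : 1 ≤ w) (hwn : w + 1 ≤ n) :
    IsGreatest (eigSet (adjMat (CS n w)ᶜ)) ((n : ℝ) - w - 1) := by
  have hwn' : w ≤ n := by omega
  have hwR : (1 : ℝ) ≤ (w : ℝ) := by exact_mod_cast hw1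
  have hnR : (w : ℝ) + 1 ≤ (n : ℝ) := by exact_mod_cast hwn
  constructor
  · refine ⟨fun u => if (u : ℕ) < w then 0 else 1, ?_, ?_⟩
    · intro h
      have hn0 : n - 1 < n := by omega
      have := congrFun h ⟨n - 1, hn0⟩
      simp only [Pi.zero_apply] at this
      rw [if_neg (by simp; omega)] at this
      simp_all
    · funext u
      rw [CSc_mulVec]
      have hS : ∑ v : Fin n, (if (v : ℕ) < w then 0
          else (if (v : ℕ) < w then (0:ℝ) else 1)) = (n : ℝ) - w := by
        have e : ∀ v ∈ (Finset.univ : Finset (Fin n)),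
            (if (v : ℕ) < w then 0 else (if (v : ℕ) < w then (0:ℝ) else 1))
            = (if (v : ℕ) < w then (0:ℝ) else 1) := by
          intro v _; by_cases hv : (v : ℕ) < w <;> simp [hv]
        rw [Finset.sum_congr rfl e, sum_split' n w hwn' 0 1]; ring
      by_cases hu : (u : ℕ) < w
      · simp [hu]
      · simp only [if_neg hu, Pi.smul_apply, smul_eq_mul, hS]
        simp [hu]
  · rintro mu ⟨x, hx0, hx⟩
    by_contra hlt
    push_neg at hlt
    have hnw1 : (0 : ℝ) ≤ (n : ℝ) - w - 1 := by linarith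
    have hmu0 : 0 < mu := lt_of_le_of_lt hnw1 hlt
    have hmu1 : mu + 1 ≠ 0 := by positivity
    have key : ∀ u : Fin n, (adjMat (CS n w)ᶜ).mulVec x u = mu * x u := by
      intro u; rw [hx]; simp
    set S : ℝ := ∑ v : Fin n, (if (v : ℕ) < w then 0 else x v) with hS
    have hzero : ∀ u : Fin n, (u : ℕ) < w → x u = 0 := by
      intro u hu
      have := key u
      rw [CSc_mulVec, if_pos hu] at this
      have : mu * x u = 0 := by linarith
      exact (mul_eq_zero.mp this).resolve_left (ne_of_gt hmu0)
    set c : ℝ := S / (mu + 1) with hc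
    have hind : ∀ u : Fin n, ¬ (u : ℕ) < w → (mu + 1) * x u = S := by
      intro u hu
      have := key u
      rw [CSc_mulVec, if_neg hu] at this
      linarith
    have hxc : ∀ u : Fin n, ¬ (u : ℕ) < w → x u = c := by
      intro u hu
      rw [hc, eq_div_iff hmu1]
      linarith [hind u hu]
    have hSval : S = ((n : ℝ) - w) * c := by
      have e : ∀ v ∈ (Finset.univ : Finset (Fin n)), (if (v : ℕ) < w then 0 else x v)
          = (if (v : ℕ) < w then 0 else c) := by
        intro v _; by_cases hv : (v : ℕ) < w <;> simp [hv, hxc v]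
      rw [hS, Finset.sum_congr rfl e, sum_split' n w hwn' 0 c]; ring
    have hc0 : c ≠ 0 := by
      intro h0
      apply hx0
      funext u
      by_cases hu : (u : ℕ) < w
      · simp [hzero u hu]
      · simp [hxc u hu, h0]
    have heq : (mu + 1) * c = ((n : ℝ) - w) * c := by
      have hu0 : n - 1 < n := by omega
      have hge : ¬ ((⟨n - 1, hu0⟩ : Fin n) : ℕ) < w := by simp; omega
      have := hind _ hge
      rw [hxc _ hge] at this
      rw [this, hSval]
    have : mu + 1 = (n : ℝ) - w := by
      have := mul_right_cancel₀ hc0 heq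
      exact this
    linarith

theorem stmt6 (n w : ℕ) (hw1 : 1 ≤ w) (hwn : w ≤ n - 1) :
    lam1 (CS n w) + lam1 (CS n w)ᶜ =
      (Real.sqrt (-3 * (w : ℝ) ^ 2 + (4 * (n : ℝ) - 2) * w + 1) - w) / 2 + n - 3 / 2 := by
  have hwn' : w + 1 ≤ n := by omega
  have h1 : lam1 (CS n w)
      = ((w : ℝ) - 1 + Real.sqrt (-3 * (w : ℝ) ^ 2 + (4 * (n : ℝ) - 2) * w + 1)) / 2 :=
    (CS_greatest n w hw1 hwn').csSup_eq
  have h2 : lam1 (CS n w)ᶜ = (n : ℝ) - w - 1 :=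
    (CSc_greatest n w hw1 hwn').csSup_eq
  rw [h1, h2]
  ring
end

section
/- For every n ≥ 4, the Q-spread of K_{n−1}^+ satisfies s_Q(K_{n−1}^+) > 2n − 5. -/
section Aux

open Finset

lemma eig_bound {n : ℕ} (M : Matrix (Fin n) (Fin n) ℝ) (C : ℝ)
    (hC : ∀ i j, |M i j| ≤ C) : ∀ μ ∈ eigSet M, |μ| ≤ n * C := by
  rintro μ ⟨x, hx0, hx⟩
  obtain ⟨k, hk⟩ : ∃ k, x k ≠ 0 := by
    by_contra h
    push_neg at h
    exact hx0 (funext h)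
  obtain ⟨i, -, hi⟩ := Finset.exists_max_image Finset.univ (fun j => |x j|) ⟨k, Finset.mem_univ k⟩
  have hxi : 0 < |x i| := lt_of_lt_of_le (abs_pos.mpr hk) (hi k (Finset.mem_univ k))
  have hrow : μ * x i = ∑ j, M i j * x j := by
    have := congrFun hx i
    simp only [Matrix.mulVec, dotProduct, Pi.smul_apply, smul_eq_mul] at this
    exact this.symm
  have h1 : |μ| * |x i| ≤ (n : ℝ) * C * |x i| := by
    calc |μ| * |x i| = |μ * x i| := (abs_mul _ _).symm
    _ = |∑ j, M i j * x j| := by rw [hrow]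
    _ ≤ ∑ j, |M i j * x j| := Finset.abs_sum_le_sum_abs _ _
    _ ≤ ∑ _j : Fin n, C * |x i| := by
        apply Finset.sum_le_sum
        intro j _
        rw [abs_mul]
        exact mul_le_mul (hC i j) (hi j (Finset.mem_univ j)) (abs_nonneg _)
          (le_trans (abs_nonneg _) (hC i j))
    _ = n * C * |x i| := by
        rw [Finset.sum_const, Finset.card_univ, Fintype.card_fin, nsmul_eq_mul, mul_assoc]
  exact le_of_mul_le_mul_right h1 hxi

lemma deg_eq_card {n : ℕ} (G : SimpleGraph (Fin n)) (v : Fin n) [DecidablePred (G.Adj v)] :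
    deg G v = (Finset.univ.filter (fun u => G.Adj v u)).card := by
  rw [deg, Nat.card_eq_fintype_card, Fintype.card_subtype]

lemma adj_zero {n : ℕ} (u w : Fin n) (hw : (w : ℕ) = 0) :
    (KPlus n).Adj w u ↔ u ≠ w := by
  show (w ≠ u ∧ _) ↔ _
  constructor
  · rintro ⟨h, -⟩; exact h.symm
  · intro h; exact ⟨h.symm, Or.inr (Or.inl hw)⟩

lemma adj_last {n : ℕ} (hn : 4 ≤ n) (u w : Fin n) (hw : (w : ℕ) = n - 1) :
    (KPlus n).Adj w u ↔ (u : ℕ) = 0 := by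
  show (w ≠ u ∧ (((w : ℕ) < n - 1 ∧ (u : ℕ) < n - 1) ∨ (w : ℕ) = 0 ∨ (u : ℕ) = 0)) ↔ _
  constructor
  · rintro ⟨hne, h⟩
    rcases h with ⟨h1, -⟩ | h | h
    · omega
    · omega
    · exact h
  · intro h
    refine ⟨?_, Or.inr (Or.inr h)⟩
    intro e
    rw [e] at hw
    omega

lemma adj_mid {n : ℕ} (hn : 4 ≤ n) (u w : Fin n) (h0 : (w : ℕ) ≠ 0) (hl : (w : ℕ) ≠ n - 1) :
    (KPlus n).Adj w u ↔ (u ≠ w ∧ (u : ℕ) ≠ n - 1) := by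
  show (w ≠ u ∧ (((w : ℕ) < n - 1 ∧ (u : ℕ) < n - 1) ∨ (w : ℕ) = 0 ∨ (u : ℕ) = 0)) ↔ _
  have hw := w.isLt
  have hu := u.isLt
  rw [Fin.ne_iff_vne, Fin.ne_iff_vne]
  omega

lemma root_mem {n : ℕ} (hn : 4 ≤ n) (t : ℝ) (ht1 : t ≠ 1)
    (hroot : ((n:ℝ)-1-t)*(2*(n:ℝ)-5-t)*(1-t) - ((n:ℝ)-2)*(1-t) - (2*(n:ℝ)-5-t) = 0) :
    t ∈ eigSet (signlessLap (KPlus n)) := by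
  classical
  have hN : (4:ℝ) ≤ (n:ℝ) := by exact_mod_cast hn
  have ht1' : t - 1 ≠ 0 := sub_ne_zero_of_ne ht1
  set N : ℝ := (n : ℝ) with hNdef
  set a : ℝ := t - 2*N + 5 with hadef
  set c : ℝ := a / (t - 1) with hcdef
  have v0 : True := trivial
  let w0 : Fin n := ⟨0, by omega⟩
  let wl : Fin n := ⟨n - 1, by omega⟩
  let w1 : Fin n := ⟨1, by omega⟩
  have hw0l : w0 ≠ wl := by
    simp only [w0, wl, Fin.ne_iff_vne]
    omega
  let x : Fin n → ℝ := fun u => if u = w0 then a else if u = wl then c else 1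
  have hxw0 : x w0 = a := by simp [x]
  have hxwl : x wl = c := by
    show (if wl = w0 then a else if wl = wl then c else 1) = c
    rw [if_neg (Ne.symm hw0l), if_pos rfl]
  refine ⟨x, ?_, ?_⟩
  · intro h
    have h1 : x w1 = 0 := by rw [h]; rfl
    have e0 : w1 ≠ w0 := by simp only [w1, w0, Fin.ne_iff_vne]; omega
    have el : w1 ≠ wl := by simp only [w1, wl, Fin.ne_iff_vne]; omega
    rw [show x w1 = 1 from by simp only [x, if_neg e0, if_neg el]] at h1
    norm_num at h1
  · funext v
    have hA : ∀ w : Fin n, (adjMat (KPlus n)).mulVec x w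
        = ∑ u, (if (KPlus n).Adj w u then x u else 0) := by
      intro w
      simp only [adjMat, Matrix.mulVec, dotProduct, SimpleGraph.adjMatrix_apply,
        ite_mul, one_mul, zero_mul]
    have hQ : signlessLap (KPlus n) = Matrix.diagonal (fun v => (deg (KPlus n) v : ℝ)) + adjMat (KPlus n) := rfl
    rw [hQ, Matrix.add_mulVec, Pi.add_apply, Matrix.mulVec_diagonal, hA, Pi.smul_apply,
      smul_eq_mul]
    by_cases hv0 : v = w0
    · subst hv0
      -- row of vertex 0
      have hsum : ∑ u, (if (KPlus n).Adj w0 u then x u else 0)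
          = (-1) + (c - 1) + N := by
        have e1 : ∀ u : Fin n, (if (KPlus n).Adj w0 u then x u else 0)
            = ((if u = w0 then (-1:ℝ) else 0) + (if u = wl then c - 1 else 0) + 1) := by
          intro u
          rw [if_congr (adj_zero u w0 rfl) rfl rfl]
          by_cases h1 : u = w0
          · subst h1
            simp [if_neg hw0l]
          · by_cases h2 : u = wl
            · subst h2
              simp [x, if_neg (Ne.symm hw0l), h1]
            · simp [x, h1, h2]
        rw [Finset.sum_congr rfl (fun u _ => e1 u)]
        rw [Finset.sum_add_distrib, Finset.sum_add_distrib, Finset.sum_ite_eq',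
          Finset.sum_ite_eq', Finset.sum_const, Finset.card_univ, Fintype.card_fin]
        simp [hNdef]
      have hdeg : deg (KPlus n) w0 = n - 1 := by
        rw [deg_eq_card]
        have hfe : Finset.univ.filter (fun u => (KPlus n).Adj w0 u) = Finset.univ.erase w0 := by
          ext u
          simp [adj_zero u w0 rfl]
        rw [hfe, Finset.card_erase_of_mem (Finset.mem_univ _), Finset.card_univ,
          Fintype.card_fin]
      have hdegR : ((deg (KPlus n) w0 : ℕ) : ℝ) = N - 1 := by
        rw [hdeg, hNdef]
        push_cast [Nat.cast_sub (by omega : 1 ≤ n)]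
        ring
      rw [hsum, hdegR, hxw0]
      rw [hcdef, hadef]
      field_simp
      nlinarith [hroot, sq_nonneg t, sq_nonneg (t-1)]
    · by_cases hvl : v = wl
      · subst hvl
        -- pendant row
        have hsum : ∑ u, (if (KPlus n).Adj wl u then x u else 0) = a := by
          have e1 : ∀ u : Fin n, (if (KPlus n).Adj wl u then x u else 0)
              = (if u = w0 then a else 0) := by
            intro u
            have : (KPlus n).Adj wl u ↔ u = w0 := by
              rw [adj_last hn u wl rfl]
              constructor
              · intro h
                apply Fin.ext
                simpa [w0] using h
              · intro h; subst h; rfl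
            rw [if_congr this rfl rfl]
            by_cases h1 : u = w0
            · subst h1; simp [hxw0]
            · simp [h1]
          rw [Finset.sum_congr rfl (fun u _ => e1 u), Finset.sum_ite_eq']
          simp
        have hdeg : deg (KPlus n) wl = 1 := by
          rw [deg_eq_card]
          have hfe : Finset.univ.filter (fun u => (KPlus n).Adj wl u) = {w0} := by
            ext u
            rw [Finset.mem_filter]
            constructor
            · rintro ⟨-, h⟩
              rw [adj_last hn u wl rfl] at h
              simp only [Finset.mem_singleton]
              apply Fin.ext
              simpa [w0] using h
            · intro h
              simp only [Finset.mem_singleton] at h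
              subst h
              exact ⟨Finset.mem_univ _, (adj_last hn w0 wl rfl).mpr rfl⟩
          rw [hfe, Finset.card_singleton]
        rw [hsum, hdeg, hxwl]
        push_cast
        rw [hcdef]
        field_simp
        ring
      · -- middle row
        have hvv0 : (v : ℕ) ≠ 0 := by
          intro h
          exact hv0 (Fin.ext (by simpa [w0] using h))
        have hvvl : (v : ℕ) ≠ n - 1 := by
          intro h
          exact hvl (Fin.ext (by simpa [wl] using h))
        have hxv : x v = 1 := by simp only [x, if_neg hv0, if_neg hvl]
        have hsum : ∑ u, (if (KPlus n).Adj v u then x u else 0)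
            = (a - 1) + (-1) + (-1) + N := by
          have e1 : ∀ u : Fin n, (if (KPlus n).Adj v u then x u else 0)
              = ((if u = w0 then a - 1 else 0) + (if u = v then (-1:ℝ) else 0)
                + (if u = wl then (-1:ℝ) else 0) + 1) := by
            intro u
            rw [if_congr (adj_mid hn u v hvv0 hvvl) rfl rfl]
            have hul : u = wl ↔ (u : ℕ) = n - 1 := by
              constructor
              · intro h; subst h; rfl
              · intro h; exact Fin.ext (by simpa [wl] using h)
            by_cases h1 : u = w0
            · subst h1
              have : w0 ≠ v := Ne.symm hv0
              rw [if_pos ⟨this, by simp [w0]; omega⟩]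
              rw [hxw0]
              rw [if_pos rfl, if_neg (Ne.symm hv0), if_neg hw0l]
              ring
            · by_cases h2 : u = v
              · subst h2
                rw [if_neg (fun hh => hh.1 rfl), if_neg h1, if_pos rfl, if_neg hvl]
                ring
              · by_cases h3 : u = wl
                · subst h3
                  rw [if_neg (fun hh => hh.2 rfl), if_neg h1, if_neg h2, if_pos rfl]
                  ring
                · rw [if_pos ⟨h2, fun hh => h3 (hul.mpr hh)⟩]
                  rw [show x u = 1 from by simp only [x, if_neg h1, if_neg h3]]
                  rw [if_neg h1, if_neg h2, if_neg h3]
                  ring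
          rw [Finset.sum_congr rfl (fun u _ => e1 u)]
          rw [Finset.sum_add_distrib, Finset.sum_add_distrib, Finset.sum_add_distrib,
            Finset.sum_ite_eq', Finset.sum_ite_eq', Finset.sum_ite_eq', Finset.sum_const,
            Finset.card_univ, Fintype.card_fin]
          simp [hNdef]
        have hdeg : deg (KPlus n) v = n - 2 := by
          rw [deg_eq_card]
          have hfe : Finset.univ.filter (fun u => (KPlus n).Adj v u)
              = (Finset.univ.erase wl).erase v := by
            ext u
            rw [Finset.mem_filter, Finset.mem_erase, Finset.mem_erase]
            rw [adj_mid hn u v hvv0 hvvl]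
            have hul : u ≠ wl ↔ (u : ℕ) ≠ n - 1 := by
              constructor
              · intro h hh
                exact h (Fin.ext (by simpa [wl] using hh))
              · intro h hh
                subst hh
                exact h rfl
            tauto
          rw [hfe]
          have hvmem : v ∈ Finset.univ.erase wl := Finset.mem_erase.mpr ⟨hvl, Finset.mem_univ _⟩
          rw [Finset.card_erase_of_mem hvmem, Finset.card_erase_of_mem (Finset.mem_univ _),
            Finset.card_univ, Fintype.card_fin]
          omega
        have hdegR : ((deg (KPlus n) v : ℕ) : ℝ) = N - 2 := by
          rw [hdeg, hNdef]
          push_cast [Nat.cast_sub (by omega : 2 ≤ n)]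
          ring
        rw [hsum, hdegR, hxv, hadef]
        ring

end Aux

theorem stmt10 (n : ℕ) (hn : 4 ≤ n) : 2 * (n : ℝ) - 5 < sQ (KPlus n) := by
  classical
  have hN : (4:ℝ) ≤ (n:ℝ) := by exact_mod_cast hn
  set N : ℝ := (n : ℝ) with hNdef
  set f : ℝ → ℝ := fun t => (N-1-t)*(2*N-5-t)*(1-t) - (N-2)*(1-t) - (2*N-5-t) with hf
  have hcont : Continuous f := by
    rw [hf]; continuity
  have hf0 : 0 < f 0 := by simp only [hf]; nlinarith
  have hf1 : f 1 < 0 := by simp only [hf]; nlinarith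
  have hfm : 0 < f (2*N-4) := by simp only [hf]; nlinarith
  have hfT : f (3*N) < 0 := by
    simp only [hf]
    nlinarith [sq_nonneg N, mul_nonneg (sq_nonneg N) (by linarith : (0:ℝ) ≤ N)]
  obtain ⟨ν, hν, hνroot⟩ : ∃ ν ∈ Set.Ioo (0:ℝ) 1, f ν = 0 := by
    have h := intermediate_value_Ioo' (by norm_num : (0:ℝ) ≤ 1) hcont.continuousOn
    have h0 : (0:ℝ) ∈ Set.Ioo (f 1) (f 0) := ⟨hf1, hf0⟩
    obtain ⟨ν, hν, hh⟩ := h h0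
    exact ⟨ν, hν, hh⟩
  obtain ⟨μ, hμ, hμroot⟩ : ∃ μ ∈ Set.Ioo (2*N-4) (3*N), f μ = 0 := by
    have h := intermediate_value_Ioo' (by nlinarith : 2*N-4 ≤ 3*N) hcont.continuousOn
    have h0 : (0:ℝ) ∈ Set.Ioo (f (3*N)) (f (2*N-4)) := ⟨hfT, hfm⟩
    obtain ⟨μ, hμ, hh⟩ := h h0
    exact ⟨μ, hμ, hh⟩
  have hνE : ν ∈ eigSet (signlessLap (KPlus n)) := by
    apply root_mem hn ν (ne_of_lt hν.2)
    simpa [hf] using hνroot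
  have hμE : μ ∈ eigSet (signlessLap (KPlus n)) := by
    apply root_mem hn μ (by intro h; rw [h] at hμ; have := hμ.1; nlinarith)
    simpa [hf] using hμroot
  -- boundedness of the eigenvalue set
  have hent : ∀ i j, |signlessLap (KPlus n) i j| ≤ N + 1 := by
    intro i j
    have hdi : ((deg (KPlus n) i : ℕ) : ℝ) ≤ N := by
      rw [hNdef]
      have : deg (KPlus n) i ≤ n := by
        rw [deg_eq_card]
        calc (Finset.univ.filter (fun u => (KPlus n).Adj i u)).card
            ≤ Finset.univ.card := Finset.card_filter_le _ _
          _ = n := by rw [Finset.card_univ, Fintype.card_fin]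
      exact_mod_cast this
    have hQ : signlessLap (KPlus n) i j
        = Matrix.diagonal (fun v => (deg (KPlus n) v : ℝ)) i j + adjMat (KPlus n) i j := rfl
    rw [hQ]
    have hadj : |adjMat (KPlus n) i j| ≤ 1 := by
      simp only [adjMat, SimpleGraph.adjMatrix_apply]
      split <;> norm_num
    have hdiag : |Matrix.diagonal (fun v => ((deg (KPlus n) v : ℕ) : ℝ)) i j| ≤ N := by
      rw [Matrix.diagonal_apply]
      split
      · rw [abs_of_nonneg (by positivity)]
        exact hdi
      · rw [abs_zero]; nlinarith
    calc |Matrix.diagonal (fun v => ((deg (KPlus n) v : ℕ) : ℝ)) i j + adjMat (KPlus n) i j|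
        ≤ |Matrix.diagonal (fun v => ((deg (KPlus n) v : ℕ) : ℝ)) i j| + |adjMat (KPlus n) i j| :=
          abs_add_le _ _
      _ ≤ N + 1 := add_le_add hdiag hadj
  have hbd := eig_bound (signlessLap (KPlus n)) (N + 1) hent
  have hAbove : BddAbove (eigSet (signlessLap (KPlus n))) :=
    ⟨(n : ℝ) * (N + 1), fun μ' hμ' => le_of_abs_le (hbd μ' hμ')⟩
  have hBelow : BddBelow (eigSet (signlessLap (KPlus n))) :=
    ⟨-((n : ℝ) * (N + 1)), fun μ' hμ' => neg_le_of_abs_le (hbd μ' hμ')⟩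
  have hq1 : μ ≤ q1 (KPlus n) := le_csSup hAbove hμE
  have hqm : qmin (KPlus n) ≤ ν := csInf_le hBelow hνE
  have : 2 * N - 5 < μ - ν := by
    have h1 := hμ.1
    have h2 := hν.2
    nlinarith
  calc 2 * (n:ℝ) - 5 = 2 * N - 5 := by rw [hNdef]
    _ < μ - ν := this
    _ ≤ sQ (KPlus n) := by
        rw [sQ]
        have := sub_le_sub hq1 hqm
        linarith
end

section
/- There exists N such that for every n ≥ N the following holds: if G is a graph maximizing the Q-spread s_Q among all connected graphs on n vertices and x is a positive unit eigenvector of Q(G) for q1(G), then the set T := {v ∈ V(G) : x_v < 1/(2√n)} has fewer than 8 elements. -/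
open Matrix Finset

open scoped Classical

section Aux

variable {n : ℕ}

lemma adjMat_apply (G : SimpleGraph (Fin n)) (v u : Fin n) :
    adjMat G v u = if G.Adj v u then (1 : ℝ) else 0 := by
  unfold adjMat
  by_cases h : G.Adj v u <;> simp [h]

lemma adjMat_symm (G : SimpleGraph (Fin n)) (v u : Fin n) :
    adjMat G v u = adjMat G u v := by
  rw [adjMat_apply, adjMat_apply]
  by_cases h : G.Adj v u
  · rw [if_pos h, if_pos (G.adj_symm h)]
  · rw [if_neg h, if_neg (fun h' => h (G.adj_symm h'))]

lemma deg_eq_sum (G : SimpleGraph (Fin n)) (v : Fin n) :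
    (deg G v : ℝ) = ∑ u, adjMat G v u := by
  simp only [adjMat_apply]
  rw [Finset.sum_boole]
  unfold deg
  rw [Nat.card_eq_fintype_card, Fintype.card_subtype]

/-- quadratic form of the signless Laplacian -/
lemma quadForm_eq (G : SimpleGraph (Fin n)) (y : Fin n → ℝ) :
    y ⬝ᵥ (signlessLap G *ᵥ y)
      = ∑ v, ∑ u, (if G.Adj v u then y v ^ 2 + y v * y u else 0) := by
  unfold signlessLap
  rw [add_mulVec, dotProduct_add]
  have h1 : y ⬝ᵥ (Matrix.diagonal (fun v => (deg G v : ℝ)) *ᵥ y)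
      = ∑ v, ∑ u, (if G.Adj v u then y v ^ 2 else 0) := by
    unfold dotProduct
    refine Finset.sum_congr rfl fun v _ => ?_
    rw [mulVec_diagonal, deg_eq_sum, Finset.sum_mul, Finset.mul_sum]
    refine Finset.sum_congr rfl fun u _ => ?_
    rw [adjMat_apply]
    by_cases h : G.Adj v u
    · rw [if_pos h, if_pos h]; ring
    · rw [if_neg h, if_neg h]; ring
  have h2 : y ⬝ᵥ (adjMat G *ᵥ y) = ∑ v, ∑ u, (if G.Adj v u then y v * y u else 0) := by
    unfold dotProduct Matrix.mulVec dotProduct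
    refine Finset.sum_congr rfl fun v _ => ?_
    rw [Finset.mul_sum]
    refine Finset.sum_congr rfl fun u _ => ?_
    beta_reduce
    rw [adjMat_apply]
    by_cases h : G.Adj v u
    · rw [if_pos h, if_pos h]; ring
    · rw [if_neg h, if_neg h]; ring
  rw [h1, h2, ← Finset.sum_add_distrib]
  refine Finset.sum_congr rfl fun v _ => ?_
  rw [← Finset.sum_add_distrib]
  refine Finset.sum_congr rfl fun u _ => ?_
  by_cases h : G.Adj v u
  · rw [if_pos h, if_pos h, if_pos h]
  · rw [if_neg h, if_neg h, if_neg h]; ring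

lemma quadForm_nonneg (G : SimpleGraph (Fin n)) (y : Fin n → ℝ) :
    0 ≤ y ⬝ᵥ (signlessLap G *ᵥ y) := by
  rw [quadForm_eq]
  have flip : (∑ v, ∑ u, (if G.Adj v u then y v ^ 2 + y v * y u else 0))
      = ∑ v, ∑ u, (if G.Adj v u then y u ^ 2 + y u * y v else 0) := by
    rw [Finset.sum_comm]
    refine Finset.sum_congr rfl fun v _ => Finset.sum_congr rfl fun u _ => ?_
    by_cases h : G.Adj v u
    · rw [if_pos h, if_pos (G.adj_symm h)]
    · rw [if_neg h, if_neg (fun h' => h (G.adj_symm h'))]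
  have key : (∑ v, ∑ u, (if G.Adj v u then y v ^ 2 + y v * y u else 0))
      + (∑ v, ∑ u, (if G.Adj v u then y u ^ 2 + y u * y v else 0))
      = ∑ v, ∑ u, (if G.Adj v u then (y v + y u) ^ 2 else 0) := by
    rw [← Finset.sum_add_distrib]
    refine Finset.sum_congr rfl fun v _ => ?_
    rw [← Finset.sum_add_distrib]
    refine Finset.sum_congr rfl fun u _ => ?_
    by_cases h : G.Adj v u
    · rw [if_pos h, if_pos h, if_pos h]; ring
    · rw [if_neg h, if_neg h, if_neg h]; ring
  have hnn : 0 ≤ ∑ v, ∑ u, (if G.Adj v u then (y v + y u) ^ 2 else 0) := by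
    refine Finset.sum_nonneg fun v _ => Finset.sum_nonneg fun u _ => ?_
    by_cases h : G.Adj v u
    · rw [if_pos h]; positivity
    · rw [if_neg h]
  linarith [flip, key, hnn]

lemma isHermitian_signlessLap (G : SimpleGraph (Fin n)) : (signlessLap G).IsHermitian := by
  unfold signlessLap
  refine Matrix.IsHermitian.add (Matrix.isHermitian_diagonal _) ?_
  rw [Matrix.IsHermitian, Matrix.conjTranspose_eq_transpose_of_trivial]
  ext v u
  rw [Matrix.transpose_apply]
  exact adjMat_symm G u v

lemma dotProduct_self_nonneg (y : Fin n → ℝ) : 0 ≤ y ⬝ᵥ y :=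
  Finset.sum_nonneg fun i _ => mul_self_nonneg _

lemma dotProduct_self_pos {y : Fin n → ℝ} (hy : y ≠ 0) : 0 < y ⬝ᵥ y := by
  obtain ⟨i, hi⟩ := Function.ne_iff.mp hy
  unfold dotProduct
  refine Finset.sum_pos' (fun j _ => mul_self_nonneg _) ⟨i, Finset.mem_univ i, ?_⟩
  exact mul_self_pos.mpr hi

/-- Spectral expansion of the Rayleigh quotient. -/
lemma spectral_expansion {M : Matrix (Fin n) (Fin n) ℝ} (hM : M.IsHermitian) (z : Fin n → ℝ) :
    z ⬝ᵥ (M *ᵥ z)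
        = ∑ i, hM.eigenvalues i *
            ((star (hM.eigenvectorUnitary : Matrix (Fin n) (Fin n) ℝ) *ᵥ z) i) ^ 2
      ∧ z ⬝ᵥ z = ∑ i, ((star (hM.eigenvectorUnitary : Matrix (Fin n) (Fin n) ℝ) *ᵥ z) i) ^ 2 := by
  set U : Matrix (Fin n) (Fin n) ℝ := (hM.eigenvectorUnitary : Matrix (Fin n) (Fin n) ℝ) with hU
  have hU2 : U * star U = 1 := Matrix.mem_unitaryGroup_iff.mp hM.eigenvectorUnitary.2
  have hU1 : star U * U = 1 := Matrix.mem_unitaryGroup_iff'.mp hM.eigenvectorUnitary.2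
  set c : Fin n → ℝ := star U *ᵥ z with hc
  have hdc : ∀ (a w : Fin n → ℝ), a ⬝ᵥ (U *ᵥ w) = (star U *ᵥ a) ⬝ᵥ w := by
    intro a w
    rw [Matrix.dotProduct_mulVec, Matrix.star_eq_conjTranspose,
      Matrix.conjTranspose_eq_transpose_of_trivial, Matrix.mulVec_transpose]
  have hz : U *ᵥ c = z := by
    rw [hc, Matrix.mulVec_mulVec, hU2, Matrix.one_mulVec]
  constructor
  · conv_lhs => rw [hM.spectral_theorem, Unitary.conjStarAlgAut_apply, ← hU]
    rw [← Matrix.mulVec_mulVec, ← Matrix.mulVec_mulVec, hdc, ← hc]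
    unfold dotProduct
    refine Finset.sum_congr rfl fun i _ => ?_
    rw [Matrix.mulVec_diagonal]
    have : (RCLike.ofReal ∘ hM.eigenvalues) i = hM.eigenvalues i := by
      simp [RCLike.ofReal_real_eq_id]
    rw [this]; ring
  · have h2 : star U *ᵥ (U *ᵥ c) = c := by
      rw [Matrix.mulVec_mulVec, hU1, Matrix.one_mulVec]
    conv_lhs => rw [← hz]
    rw [hdc, h2]
    unfold dotProduct
    refine Finset.sum_congr rfl fun i _ => ?_
    ring

lemma eigenvalues_mem_eigSet {M : Matrix (Fin n) (Fin n) ℝ} (hM : M.IsHermitian) (i : Fin n) :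
    hM.eigenvalues i ∈ eigSet M :=
  ⟨_, fun h => hM.eigenvectorBasis.orthonormal.ne_zero i (by simpa using h), hM.mulVec_eigenvectorBasis i⟩

lemma eigSet_bounds {M : Matrix (Fin n) (Fin n) ℝ} (hn : 0 < n) (hM : M.IsHermitian) :
    ∀ μ ∈ eigSet M,
      (Finset.univ.inf' (Finset.univ_nonempty_iff.mpr ⟨⟨0, hn⟩⟩) hM.eigenvalues) ≤ μ ∧
      μ ≤ (Finset.univ.sup' (Finset.univ_nonempty_iff.mpr ⟨⟨0, hn⟩⟩) hM.eigenvalues) := by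
  haveI : Nonempty (Fin n) := ⟨⟨0, hn⟩⟩
  rintro μ ⟨v, hv0, hveq⟩
  have he := spectral_expansion hM v
  have h1 : μ * (v ⬝ᵥ v)
      = ∑ i, hM.eigenvalues i *
          ((star (hM.eigenvectorUnitary : Matrix (Fin n) (Fin n) ℝ) *ᵥ v) i) ^ 2 := by
    rw [← he.1, hveq, dotProduct_smul, smul_eq_mul]
  have hvv : 0 < v ⬝ᵥ v := dotProduct_self_pos hv0
  constructor
  · have hlow : (Finset.univ.inf' (Finset.univ_nonempty_iff.mpr ⟨⟨0, hn⟩⟩) hM.eigenvalues)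
        * (v ⬝ᵥ v) ≤ μ * (v ⬝ᵥ v) := by
      rw [h1, he.2, Finset.mul_sum]
      refine Finset.sum_le_sum fun i _ => ?_
      exact mul_le_mul_of_nonneg_right (Finset.inf'_le _ (Finset.mem_univ i)) (sq_nonneg _)
    exact le_of_mul_le_mul_right hlow hvv
  · have hupp : μ * (v ⬝ᵥ v)
        ≤ (Finset.univ.sup' (Finset.univ_nonempty_iff.mpr ⟨⟨0, hn⟩⟩) hM.eigenvalues)
          * (v ⬝ᵥ v) := by
      rw [h1, he.2, Finset.mul_sum]
      refine Finset.sum_le_sum fun i _ => ?_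
      exact mul_le_mul_of_nonneg_right (Finset.le_sup' _ (Finset.mem_univ i)) (sq_nonneg _)
    exact le_of_mul_le_mul_right hupp hvv

/-- Rayleigh bounds via the spectral theorem. -/
lemma rayleigh_le_lamMax {M : Matrix (Fin n) (Fin n) ℝ} (hn : 0 < n)
    (hM : M.IsHermitian) (y : Fin n → ℝ) :
    y ⬝ᵥ (M *ᵥ y) ≤ lamMax M * (y ⬝ᵥ y) := by
  haveI : Nonempty (Fin n) := ⟨⟨0, hn⟩⟩
  have hne : (Finset.univ : Finset (Fin n)).Nonempty := Finset.univ_nonempty_iff.mpr ⟨⟨0, hn⟩⟩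
  set lmax := Finset.univ.sup' (Finset.univ_nonempty_iff.mpr ⟨⟨0, hn⟩⟩) hM.eigenvalues with hl
  have hmem : lmax ∈ eigSet M := by
    obtain ⟨i, -, hi⟩ := Finset.exists_mem_eq_sup' hne hM.eigenvalues
    rw [hl, hi]
    exact eigenvalues_mem_eigSet hM i
  have hbdd : BddAbove (eigSet M) := ⟨lmax, fun μ hμ => (eigSet_bounds hn hM μ hμ).2⟩
  have hle : lmax ≤ lamMax M := le_csSup hbdd hmem
  have he := spectral_expansion hM y
  have h1 : y ⬝ᵥ (M *ᵥ y) ≤ lmax * (y ⬝ᵥ y) := by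
    rw [he.1, he.2, Finset.mul_sum]
    refine Finset.sum_le_sum fun i _ => ?_
    exact mul_le_mul_of_nonneg_right (Finset.le_sup' _ (Finset.mem_univ i)) (sq_nonneg _)
  calc y ⬝ᵥ (M *ᵥ y) ≤ lmax * (y ⬝ᵥ y) := h1
    _ ≤ lamMax M * (y ⬝ᵥ y) := mul_le_mul_of_nonneg_right hle (dotProduct_self_nonneg y)

lemma lamMin_le_rayleigh {M : Matrix (Fin n) (Fin n) ℝ} (hn : 0 < n)
    (hM : M.IsHermitian) (y : Fin n → ℝ) :
    lamMin M * (y ⬝ᵥ y) ≤ y ⬝ᵥ (M *ᵥ y) := by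
  haveI : Nonempty (Fin n) := ⟨⟨0, hn⟩⟩
  have hne : (Finset.univ : Finset (Fin n)).Nonempty := Finset.univ_nonempty_iff.mpr ⟨⟨0, hn⟩⟩
  set lmin := Finset.univ.inf' (Finset.univ_nonempty_iff.mpr ⟨⟨0, hn⟩⟩) hM.eigenvalues with hl
  have hmem : lmin ∈ eigSet M := by
    obtain ⟨i, -, hi⟩ := Finset.exists_mem_eq_inf' hne hM.eigenvalues
    rw [hl, hi]
    exact eigenvalues_mem_eigSet hM i
  have hbdd : BddBelow (eigSet M) := ⟨lmin, fun μ hμ => (eigSet_bounds hn hM μ hμ).1⟩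
  have hge : lamMin M ≤ lmin := csInf_le hbdd hmem
  have he := spectral_expansion hM y
  have h1 : lmin * (y ⬝ᵥ y) ≤ y ⬝ᵥ (M *ᵥ y) := by
    rw [he.1, he.2, Finset.mul_sum]
    refine Finset.sum_le_sum fun i _ => ?_
    exact mul_le_mul_of_nonneg_right (Finset.inf'_le _ (Finset.mem_univ i)) (sq_nonneg _)
  calc lamMin M * (y ⬝ᵥ y) ≤ lmin * (y ⬝ᵥ y) :=
        mul_le_mul_of_nonneg_right hge (dotProduct_self_nonneg y)
    _ ≤ y ⬝ᵥ (M *ᵥ y) := h1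

lemma qmin_nonneg (G : SimpleGraph (Fin n)) : 0 ≤ qmin G := by
  apply Real.sInf_nonneg
  rintro μ ⟨v, hv0, hveq⟩
  have h1 : 0 ≤ v ⬝ᵥ (signlessLap G *ᵥ v) := quadForm_nonneg G v
  rw [hveq, dotProduct_smul, smul_eq_mul] at h1
  have h2 : 0 < v ⬝ᵥ v := dotProduct_self_pos hv0
  by_contra h
  push_neg at h
  nlinarith [h1, h2]

lemma KPlus_adj {v u : Fin n} :
    (KPlus n).Adj v u ↔ ((v : ℕ) ≠ (u : ℕ) ∧
      (((v : ℕ) < n - 1 ∧ (u : ℕ) < n - 1) ∨ (v : ℕ) = 0 ∨ (u : ℕ) = 0)) := by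
  constructor
  · rintro ⟨h1, h2⟩; exact ⟨fun h => h1 (Fin.ext h), h2⟩
  · rintro ⟨h1, h2⟩; exact ⟨fun h => h1 (congrArg Fin.val h), h2⟩

lemma KPlus_connected (hn : 1 ≤ n) : (KPlus n).Connected := by
  haveI : Nonempty (Fin n) := ⟨⟨0, hn⟩⟩
  set v0 : Fin n := ⟨0, hn⟩ with hv0
  have hadj : ∀ w : Fin n, w ≠ v0 → (KPlus n).Adj v0 w := by
    intro w hw
    exact ⟨fun h => hw h.symm, Or.inr (Or.inl rfl)⟩
  rw [SimpleGraph.connected_iff]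
  refine ⟨fun u v => ?_, ⟨v0⟩⟩
  rcases eq_or_ne u v0 with h | h
  · rcases eq_or_ne v v0 with h' | h'
    · rw [h, h']
    · rw [h]; exact (hadj v h').reachable
  · rcases eq_or_ne v v0 with h' | h'
    · rw [h']; exact ((hadj u h).symm).reachable
    · exact (((hadj u h).symm).reachable).trans (hadj v h').reachable

lemma sum_fin_ite_lt (m : ℕ) (f : ℕ → ℝ) :
    (∑ v : Fin (m + 1), f v.val) = ∑ i ∈ Finset.range (m + 1), f i :=
  Fin.sum_univ_eq_sum_range f (m + 1)

lemma sQ_KPlus (hn : 100 ≤ n) : (2 * (n : ℝ) - 5) ≤ sQ (KPlus n) := by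
  obtain ⟨m, rfl⟩ : ∃ m, n = m + 1 := ⟨n - 1, by omega⟩
  have hm : 99 ≤ m := by omega
  have hm0 : m ≠ 0 := by omega
  have hmm : m + 1 - 1 = m := by omega
  have hQh := isHermitian_signlessLap (KPlus (m + 1))
  -- the test vector supported on the clique
  set y : Fin (m + 1) → ℝ := fun v => if (v : ℕ) < m then 1 else 0 with hy
  have hcond : ∀ v u : Fin (m + 1), (KPlus (m + 1)).Adj v u ↔
      ((v : ℕ) ≠ (u : ℕ) ∧ (((v : ℕ) < m ∧ (u : ℕ) < m) ∨ (v : ℕ) = 0 ∨ (u : ℕ) = 0)) := by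
    intro v u
    rw [KPlus_adj, hmm]
  -- value of the quadratic form on y
  set g : ℕ → ℕ → ℝ := fun i j =>
    if (i ≠ j ∧ ((i < m ∧ j < m) ∨ i = 0 ∨ j = 0)) then
      ((if i < m then (1 : ℝ) else 0) ^ 2
        + (if i < m then (1 : ℝ) else 0) * (if j < m then (1 : ℝ) else 0))
    else 0 with hg
  have hyQy : y ⬝ᵥ (signlessLap (KPlus (m + 1)) *ᵥ y) = 2 * (m : ℝ) ^ 2 - 2 * m + 1 := by
    rw [quadForm_eq]
    have hval : (∑ v : Fin (m + 1), ∑ u : Fin (m + 1),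
        (if (KPlus (m + 1)).Adj v u then y v ^ 2 + y v * y u else 0))
        = ∑ i ∈ Finset.range (m + 1), ∑ j ∈ Finset.range (m + 1), g i j := by
      rw [show (∑ v : Fin (m + 1), ∑ u : Fin (m + 1),
          (if (KPlus (m + 1)).Adj v u then y v ^ 2 + y v * y u else 0))
          = ∑ v : Fin (m + 1), ∑ u : Fin (m + 1), g v.val u.val from ?_]
      · calc ∑ v : Fin (m + 1), ∑ u : Fin (m + 1), g v.val u.val
            = ∑ v : Fin (m + 1), ∑ j ∈ Finset.range (m + 1), g v.val j :=
              Finset.sum_congr rfl fun v _ => sum_fin_ite_lt m (g v.val)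
          _ = ∑ i ∈ Finset.range (m + 1), ∑ j ∈ Finset.range (m + 1), g i j :=
              sum_fin_ite_lt m (fun i => ∑ j ∈ Finset.range (m + 1), g i j)
      · refine Finset.sum_congr rfl fun v _ => Finset.sum_congr rfl fun u _ => ?_
        rw [if_congr (hcond v u) rfl rfl]
    rw [hval]
    -- evaluate the double sum
    have hrow_small : ∀ i ∈ Finset.range m,
        (∑ j ∈ Finset.range (m + 1), g i j) = 2 * (m : ℝ) - 2 + (if i = 0 then 1 else 0) := by
      intro i hi
      rw [Finset.mem_range] at hi
      rw [Finset.sum_range_succ]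
      have hgm : g i m = (if i = 0 then (1 : ℝ) else 0) := by
        by_cases h0 : i = 0
        · rw [if_pos h0, hg]
          simp only
          rw [if_pos ⟨by omega, Or.inr (Or.inl h0)⟩, if_pos hi, if_neg (lt_irrefl m)]
          ring
        · rw [if_neg h0, hg]
          simp only
          rw [if_neg (by rintro ⟨-, (⟨-, h⟩ | h | h)⟩ <;> omega)]
      have hrow : ∀ j ∈ Finset.range m, g i j = 2 - (if j = i then (2 : ℝ) else 0) := by
        intro j hj
        rw [Finset.mem_range] at hj
        by_cases hij : j = i
        · subst hij
          rw [if_pos rfl, hg]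
          simp only
          rw [if_neg (by rintro ⟨h, -⟩; exact h rfl)]
          ring
        · rw [if_neg hij, hg]
          simp only
          rw [if_pos ⟨fun h => hij h.symm, Or.inl ⟨hi, hj⟩⟩, if_pos hi, if_pos hj]
          ring
      rw [Finset.sum_congr rfl hrow, Finset.sum_sub_distrib, Finset.sum_const,
        Finset.sum_ite_eq' (Finset.range m) i, if_pos (Finset.mem_range.mpr hi),
        Finset.card_range, hgm]
      push_cast
      ring
    have hrow_top : (∑ j ∈ Finset.range (m + 1), g m j) = 0 := by
      refine Finset.sum_eq_zero fun j _ => ?_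
      rw [hg]
      simp only
      rw [if_neg (lt_irrefl m)]
      split <;> ring
    rw [Finset.sum_range_succ, hrow_top, Finset.sum_congr rfl hrow_small,
      Finset.sum_add_distrib, Finset.sum_const, Finset.sum_ite_eq' (Finset.range m) 0,
      if_pos (Finset.mem_range.mpr (by omega)), Finset.card_range]
    push_cast
    ring
  have hyy : y ⬝ᵥ y = (m : ℝ) := by
    unfold dotProduct
    rw [sum_fin_ite_lt m (fun i => (if i < m then (1:ℝ) else 0) * (if i < m then (1:ℝ) else 0))]
    rw [Finset.sum_range_succ, if_neg (lt_irrefl m)]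
    have : ∀ i ∈ Finset.range m, (if i < m then (1:ℝ) else 0) * (if i < m then (1:ℝ) else 0)
        = 1 := by
      intro i hi
      rw [Finset.mem_range] at hi
      rw [if_pos hi]
      ring
    rw [Finset.sum_congr rfl this, Finset.sum_const, Finset.card_range]
    simp
  -- the test vector at the pendant vertex
  set e : Fin (m + 1) → ℝ := fun v => if (v : ℕ) = m then 1 else 0 with he
  have hee : e ⬝ᵥ e = 1 := by
    unfold dotProduct
    rw [sum_fin_ite_lt m (fun i => (if i = m then (1:ℝ) else 0) * (if i = m then (1:ℝ) else 0))]
    rw [Finset.sum_range_succ, if_pos rfl]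
    have : ∀ i ∈ Finset.range m, (if i = m then (1:ℝ) else 0) * (if i = m then (1:ℝ) else 0)
        = 0 := by
      intro i hi
      rw [Finset.mem_range] at hi
      rw [if_neg (by omega)]
      ring
    rw [Finset.sum_congr rfl this, Finset.sum_const]
    simp
  have heQe : e ⬝ᵥ (signlessLap (KPlus (m + 1)) *ᵥ e) = 1 := by
    rw [quadForm_eq]
    set g' : ℕ → ℕ → ℝ := fun i j =>
      if (i ≠ j ∧ ((i < m ∧ j < m) ∨ i = 0 ∨ j = 0)) then
        ((if i = m then (1 : ℝ) else 0) ^ 2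
          + (if i = m then (1 : ℝ) else 0) * (if j = m then (1 : ℝ) else 0))
      else 0 with hg'
    have hval : (∑ v : Fin (m + 1), ∑ u : Fin (m + 1),
        (if (KPlus (m + 1)).Adj v u then e v ^ 2 + e v * e u else 0))
        = ∑ i ∈ Finset.range (m + 1), ∑ j ∈ Finset.range (m + 1), g' i j := by
      rw [show (∑ v : Fin (m + 1), ∑ u : Fin (m + 1),
          (if (KPlus (m + 1)).Adj v u then e v ^ 2 + e v * e u else 0))
          = ∑ v : Fin (m + 1), ∑ u : Fin (m + 1), g' v.val u.val from ?_]
      · calc ∑ v : Fin (m + 1), ∑ u : Fin (m + 1), g' v.val u.val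
            = ∑ v : Fin (m + 1), ∑ j ∈ Finset.range (m + 1), g' v.val j :=
              Finset.sum_congr rfl fun v _ => sum_fin_ite_lt m (g' v.val)
          _ = ∑ i ∈ Finset.range (m + 1), ∑ j ∈ Finset.range (m + 1), g' i j :=
              sum_fin_ite_lt m (fun i => ∑ j ∈ Finset.range (m + 1), g' i j)
      · refine Finset.sum_congr rfl fun v _ => Finset.sum_congr rfl fun u _ => ?_
        rw [if_congr (hcond v u) rfl rfl]
    rw [hval]
    have hrow_small : ∀ i ∈ Finset.range m, (∑ j ∈ Finset.range (m + 1), g' i j) = 0 := by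
      intro i hi
      rw [Finset.mem_range] at hi
      refine Finset.sum_eq_zero fun j _ => ?_
      rw [hg']
      simp only
      split
      · rw [if_neg (by omega : ¬ i = m)]; ring
      · rfl
    have hrow_top : (∑ j ∈ Finset.range (m + 1), g' m j) = 1 := by
      have : ∀ j ∈ Finset.range (m + 1), g' m j = (if j = 0 then (1:ℝ) else 0) := by
        intro j hj
        rw [Finset.mem_range] at hj
        by_cases h0 : j = 0
        · subst h0
          rw [hg']
          simp only
          rw [if_pos ⟨by omega, Or.inr (Or.inr trivial)⟩]
          have h0m : ¬ (0 : ℕ) = m := by omega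
          simp [h0m]
        · rw [if_neg h0, hg']
          simp only
          rw [if_neg (by rintro ⟨h, (⟨h1, -⟩ | h1 | h1)⟩ <;> omega)]
      rw [Finset.sum_congr rfl this, Finset.sum_ite_eq' (Finset.range (m + 1)) 0,
        if_pos (Finset.mem_range.mpr (by omega))]
    rw [Finset.sum_range_succ, hrow_top, Finset.sum_congr rfl hrow_small, Finset.sum_const]
    simp
  -- conclude
  have h1 := rayleigh_le_lamMax (n := m + 1) (by omega) hQh y
  rw [hyQy, hyy] at h1
  have h2 := lamMin_le_rayleigh (n := m + 1) (by omega) hQh e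
  rw [heQe, hee, mul_one] at h2
  unfold sQ q1 qmin
  have hmr : (99 : ℝ) ≤ (m : ℝ) := by exact_mod_cast hm
  push_cast
  nlinarith [h1, h2, hmr]

end Aux

lemma final_arith (nn t X : ℝ) (hn : 100 ≤ nn) (ht8 : 8 ≤ t) (htn : t ≤ nn) (hX0 : 0 ≤ X)
    (hmain : (nn - 4) ^ 2 * X ≤ (nn - 1) * (1 - X))
    (hA : 1 < t * (1 / (4 * nn)) + (nn - t) * X) : False := by
  have hD : (0 : ℝ) < nn ^ 2 - 7 * nn + 15 := by nlinarith [sq_nonneg (nn - 7)]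
  have hM1 : X * (nn ^ 2 - 7 * nn + 15) ≤ nn - 1 := by
    ring_nf at hmain ⊢
    linarith [hmain]
  have hA4 : 4 * nn - t < 4 * nn * ((nn - t) * X) := by
    have key : 4 * nn * (t * (1 / (4 * nn))) = t := by field_simp
    nlinarith [mul_lt_mul_of_pos_left hA (show (0:ℝ) < 4*nn by linarith), key]
  have hnt : (0 : ℝ) ≤ nn - t := by linarith
  have hstep : (4 * nn - t) * (nn ^ 2 - 7 * nn + 15)
      < 4 * nn * (nn - t) * (nn - 1) := by
    calc (4 * nn - t) * (nn ^ 2 - 7 * nn + 15)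
        < (4 * nn * ((nn - t) * X)) * (nn ^ 2 - 7 * nn + 15) :=
          mul_lt_mul_of_pos_right hA4 hD
      _ = (4 * nn * (nn - t)) * (X * (nn ^ 2 - 7 * nn + 15)) := by ring
      _ ≤ (4 * nn * (nn - t)) * (nn - 1) := by
          apply mul_le_mul_of_nonneg_left hM1
          nlinarith
      _ = 4 * nn * (nn - t) * (nn - 1) := by ring
  have hp1 : (0:ℝ) ≤ t - 8 := by linarith
  have hp2 : (0:ℝ) ≤ 3 * nn ^ 2 + 3 * nn - 15 := by nlinarith
  have hfin : 4 * nn * (nn - t) * (nn - 1)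
      ≤ (4 * nn - t) * (nn ^ 2 - 7 * nn + 15) := by
    nlinarith [mul_nonneg hp1 hp2]
  linarith [hstep, hfin]

theorem stmt15 :
    ∃ N : ℕ, ∀ n : ℕ, N ≤ n →
      ∀ G : SimpleGraph (Fin n), G.Connected →
        (∀ H : SimpleGraph (Fin n), H.Connected → sQ H ≤ sQ G) →
        ∀ x : Fin n → ℝ, (∀ v, 0 < x v) → (∑ v, x v ^ 2 = 1) →
          (signlessLap G).mulVec x = q1 G • x →
          Set.ncard {v : Fin n | x v < 1 / (2 * Real.sqrt n)} < 8 := by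
  refine ⟨100, fun n hn G hG hmax x hxpos hxsum heig => ?_⟩
  have hnR : (100 : ℝ) ≤ (n : ℝ) := by exact_mod_cast hn
  -- Step 1 : q1 G ≥ 2n - 5
  have hq : (2 * (n : ℝ) - 5) ≤ q1 G := by
    have h1 := hmax (KPlus n) (KPlus_connected (by omega))
    have h2 := sQ_KPlus hn
    have h3 := qmin_nonneg G
    unfold sQ at h1 h2
    linarith
  -- Step 2 : the maximal entry of x
  haveI : Nonempty (Fin n) := ⟨⟨0, by omega⟩⟩
  obtain ⟨v, -, hv⟩ := Finset.exists_max_image (Finset.univ : Finset (Fin n)) x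
    ⟨⟨0, by omega⟩, Finset.mem_univ _⟩
  have hvmax : ∀ u, x u ≤ x v := fun u => hv u (Finset.mem_univ u)
  set Nb := Finset.univ.filter (G.Adj v) with hNb
  set d : ℝ := (Nb.card : ℝ) with hd
  -- the eigen-equation at v
  have hrow : (d * x v) + (∑ u ∈ Nb, x u) = q1 G * x v := by
    have h := congrFun heig v
    unfold signlessLap at h
    rw [add_mulVec] at h
    simp only [Pi.add_apply, Pi.smul_apply, smul_eq_mul] at h
    rw [mulVec_diagonal] at h
    have hdg : (deg G v : ℝ) = d := by
      rw [hd, hNb]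
      unfold deg
      rw [Nat.card_eq_fintype_card, Fintype.card_subtype]
    have hadv : (adjMat G *ᵥ x) v = ∑ u ∈ Nb, x u := by
      unfold Matrix.mulVec dotProduct
      rw [hNb, Finset.sum_filter]
      refine Finset.sum_congr rfl fun u _ => ?_
      beta_reduce
      rw [adjMat_apply]
      by_cases hadj : G.Adj v u
      · rw [if_pos hadj, if_pos hadj]; ring
      · rw [if_neg hadj, if_neg hadj]; ring
    rw [hadv, hdg] at h
    linarith [h]
  -- Cauchy-Schwarz
  have hcs : (∑ u ∈ Nb, x u) ^ 2 ≤ d * (∑ u ∈ Nb, x u ^ 2) := by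
    have h := Finset.sum_mul_sq_le_sq_mul_sq Nb (fun _ => (1 : ℝ)) x
    simpa using h
  have hvNb : v ∉ Nb := by
    rw [hNb]
    simp only [Finset.mem_filter, Finset.mem_univ, true_and]
    exact fun h => (G.loopless.irrefl v h)
  have hsub : (∑ u ∈ Nb, x u ^ 2) ≤ 1 - x v ^ 2 := by
    have hss : Nb ⊆ Finset.univ.erase v := by
      intro u hu
      rcases Finset.mem_filter.mp (hNb ▸ hu) with ⟨-, hadj⟩
      exact Finset.mem_erase.mpr ⟨fun h => G.loopless.irrefl v (h ▸ hadj), Finset.mem_univ u⟩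
    have h1 : (∑ u ∈ Nb, x u ^ 2) ≤ ∑ u ∈ Finset.univ.erase v, x u ^ 2 :=
      Finset.sum_le_sum_of_subset_of_nonneg hss (fun u _ _ => sq_nonneg _)
    have h2 : x v ^ 2 + (∑ u ∈ Finset.univ.erase v, x u ^ 2) = 1 := by
      have h3 := Finset.add_sum_erase Finset.univ (fun u => x u ^ 2) (Finset.mem_univ v)
      rw [h3]
      exact hxsum
    linarith
  have hdn : d ≤ (n : ℝ) - 1 := by
    have h1 : Nb.card ≤ (Finset.univ.erase v).card := by
      apply Finset.card_le_card
      intro u hu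
      rcases Finset.mem_filter.mp (hNb ▸ hu) with ⟨-, hadj⟩
      exact Finset.mem_erase.mpr ⟨fun h => G.loopless.irrefl v (h ▸ hadj), Finset.mem_univ u⟩
    have h2 : (Finset.univ.erase v).card = n - 1 := by
      rw [Finset.card_erase_of_mem (Finset.mem_univ v), Finset.card_univ, Fintype.card_fin]
    rw [h2] at h1
    have h3 : (Nb.card : ℝ) ≤ ((n - 1 : ℕ) : ℝ) := by exact_mod_cast h1
    rw [hd]
    calc (Nb.card : ℝ) ≤ ((n - 1 : ℕ) : ℝ) := h3
      _ = (n : ℝ) - 1 := by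
          rw [Nat.cast_sub (show 1 ≤ n by omega)]
          norm_num
  have hd0 : 0 ≤ d := by rw [hd]; positivity
  -- the key bound on X = x v ^ 2
  set X : ℝ := x v ^ 2 with hX
  have hX0 : 0 ≤ X := sq_nonneg _
  have hmain : ((n : ℝ) - 4) ^ 2 * X ≤ ((n : ℝ) - 1) * (1 - X) := by
    have hqd : (n : ℝ) - 4 ≤ q1 G - d := by linarith
    have h1 : (q1 G - d) ^ 2 * X = (∑ u ∈ Nb, x u) ^ 2 := by
      rw [hX]
      have : (q1 G - d) * x v = ∑ u ∈ Nb, x u := by linarith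
      rw [← this]
      ring
    have h2 : (q1 G - d) ^ 2 * X ≤ ((n : ℝ) - 1) * (1 - X) := by
      rw [h1]
      calc (∑ u ∈ Nb, x u) ^ 2 ≤ d * (∑ u ∈ Nb, x u ^ 2) := hcs
        _ ≤ ((n : ℝ) - 1) * (1 - X) := by
            have hs0 : 0 ≤ ∑ u ∈ Nb, x u ^ 2 :=
              Finset.sum_nonneg fun u _ => sq_nonneg (x u)
            apply mul_le_mul hdn hsub hs0 (by linarith)
    have h3 : ((n : ℝ) - 4) ^ 2 * X ≤ (q1 G - d) ^ 2 * X := by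
      apply mul_le_mul_of_nonneg_right _ hX0
      have h4 : (0 : ℝ) ≤ (n : ℝ) - 4 := by linarith
      nlinarith [hqd, h4]
    linarith
  -- Step 3 : counting
  have hsq : (0 : ℝ) < Real.sqrt n := Real.sqrt_pos.mpr (by positivity)
  set c : ℝ := 1 / (2 * Real.sqrt n) with hc
  have hc0 : 0 < c := by positivity
  have hc2 : c ^ 2 = 1 / (4 * n) := by
    rw [hc]
    rw [div_pow, mul_pow, Real.sq_sqrt (by positivity : (0:ℝ) ≤ (n:ℝ))]
    norm_num
  set Tf := Finset.univ.filter (fun w => x w < c) with hTf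
  have hset : {w : Fin n | x w < c} = ↑Tf := by
    ext w
    simp [hTf]
  rw [hset, Set.ncard_coe_finset]
  by_contra hge
  push_neg at hge
  have ht8 : (8 : ℝ) ≤ (Tf.card : ℝ) := by exact_mod_cast hge
  have htnn : Tf.card ≤ n := by
    calc Tf.card ≤ (Finset.univ : Finset (Fin n)).card := Finset.card_le_card (by simp [hTf])
      _ = n := by rw [Finset.card_univ, Fintype.card_fin]
  have htn : (Tf.card : ℝ) ≤ (n : ℝ) := by exact_mod_cast htnn
  have hTne : Tf.Nonempty := Finset.card_pos.mp (by omega)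
  have hsplit : (∑ u ∈ Finset.univ \ Tf, x u ^ 2) + (∑ u ∈ Tf, x u ^ 2) = 1 := by
    rw [Finset.sum_sdiff (Finset.subset_univ Tf)]
    exact hxsum
  have hT : (∑ u ∈ Tf, x u ^ 2) < (Tf.card : ℝ) * (1 / (4 * n)) := by
    have h1 : (∑ u ∈ Tf, x u ^ 2) < ∑ _u ∈ Tf, 1 / (4 * (n : ℝ)) := by
      apply Finset.sum_lt_sum_of_nonempty hTne
      intro u hu
      have hu' : x u < c := by
        rw [hTf] at hu
        exact (Finset.mem_filter.mp hu).2
      have := pow_lt_pow_left₀ hu' (le_of_lt (hxpos u)) (by norm_num : 2 ≠ 0)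
      rw [hc2] at this
      exact this
    rw [Finset.sum_const, nsmul_eq_mul] at h1
    exact h1
  have hTc : (∑ u ∈ Finset.univ \ Tf, x u ^ 2) ≤ ((n : ℝ) - Tf.card) * X := by
    have hcard : (Finset.univ \ Tf).card = n - Tf.card := by
      rw [Finset.card_sdiff_of_subset (Finset.subset_univ Tf), Finset.card_univ, Fintype.card_fin]
    have h1 : (∑ u ∈ Finset.univ \ Tf, x u ^ 2) ≤ (Finset.univ \ Tf).card • X := by
      apply Finset.sum_le_card_nsmul
      intro u _
      rw [hX]
      have h2 : 0 < x u := hxpos u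
      nlinarith [hvmax u]
    rw [hcard, nsmul_eq_mul] at h1
    calc (∑ u ∈ Finset.univ \ Tf, x u ^ 2)
        ≤ ((n - Tf.card : ℕ) : ℝ) * X := h1
      _ = ((n : ℝ) - Tf.card) * X := by
          rw [Nat.cast_sub htnn]
  -- final arithmetic contradiction
  exact final_arith n (Tf.card : ℝ) X hnR ht8 htn hX0 hmain
    (by linarith [hT, hTc, hsplit])
end
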